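/- arXiv:2508.20456 — 6 statements merged into one kernel-verified Lean document; each statement's English description precedes it below -/
import Mathlib

section
/- For every integer d ≥ 2 and every real number φ, the Jackson kernel satisfies u_d(φ) ≥ 0. -/
open Real

/-- The Jackson damping factor `ρ_{j,d}`. -/
noncomputable def jacksonDamp (d j : ℕ) : ℝ :=
  Real.sin ((j + 1) * (π / (d + 2))) / ((d + 2) * Real.sin (π / (d + 2)))
    + (1 - (j + 1) / (d + 2)) * Real.cos (j * (π / (d + 2)))

/-- The Jackson kernel `u_d(φ) = 1/2 + Σ_{j=1}^d ρ_{j,d} cos(jφ)`. -/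
noncomputable def jacksonKernel (d : ℕ) (φ : ℝ) : ℝ :=
  1 / 2 + ∑ j ∈ Finset.Icc 1 d, jacksonDamp d j * Real.cos (j * φ)

private lemma sum_cos_tel (a c : ℝ) (m : ℕ) :
    (2 * sin a) * ∑ k ∈ Finset.range m, cos (c + 2 * k * a)
      = sin (c + (2 * m - 1) * a) - sin (c - a) := by
  induction m with
  | zero => simp; ring_nf
  | succ m ih =>
    rw [Finset.sum_range_succ, mul_add, ih]
    push_cast
    rw [show c + (2 * ((m:ℝ) + 1) - 1) * a = (c + 2 * m * a) + a by ring,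
        show c + (2 * (m:ℝ) - 1) * a = (c + 2 * m * a) - a by ring,
        sin_add, sin_sub]
    ring

private lemma sin_alpha_pos (d : ℕ) : 0 < sin (π / (d + 2)) := by
  apply sin_pos_of_pos_of_lt_pi (div_pos pi_pos (by positivity))
  rw [div_lt_iff₀ (by positivity)]
  nlinarith [pi_pos]

private lemma sumA (d : ℕ) :
    ∑ k ∈ Finset.range (d + 1), sin ((k + 1) * (π / (d + 2))) ^ 2 = ((d : ℝ) + 2) / 2 := by
  set a := π / (d + 2) with ha
  have hsa : sin a ≠ 0 := ne_of_gt (sin_alpha_pos d)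
  have htel := sum_cos_tel a (2 * a) (d + 1)
  have harg : (2 * a + (2 * ((d:ℝ) + 1) - 1) * a) = 2 * π - a := by
    rw [ha]; field_simp; ring
  have hS : ∑ k ∈ Finset.range (d + 1), cos (2 * a + 2 * k * a) = -1 := by
    have h2 : sin (2 * a + (2 * ((d:ℝ)+1) - 1) * a) = - sin a := by
      rw [harg, sin_sub, sin_two_pi, cos_two_pi]; ring
    push_cast at htel
    rw [h2, show 2 * a - a = a by ring] at htel
    have h3 : (2 * sin a) * ∑ k ∈ Finset.range (d + 1), cos (2 * a + 2 * k * a)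
        = (2 * sin a) * (-1) := by rw [htel]; ring
    exact mul_left_cancel₀ (by simpa using hsa) h3
  have expand : ∀ k ∈ Finset.range (d + 1),
      sin ((k + 1) * a) ^ 2 = 1 / 2 - cos (2 * a + 2 * k * a) / 2 := by
    intro k _
    rw [sin_sq_eq_half_sub]
    congr 2
    ring
  rw [Finset.sum_congr rfl expand, Finset.sum_sub_distrib, Finset.sum_const,
      ← Finset.sum_div, hS]
  simp
  ring

private lemma sumB (d j : ℕ) (hjd : j ≤ d) :
    ∑ l ∈ Finset.range (d + 1 - j),
        sin ((l + 1) * (π / (d + 2))) * sin ((l + 1 + j) * (π / (d + 2)))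
      = ((d : ℝ) + 2) / 2 * jacksonDamp d j := by
  set a := π / (d + 2) with ha
  have hsa : sin a ≠ 0 := ne_of_gt (sin_alpha_pos d)
  have hm : ((d + 1 - j : ℕ) : ℝ) = (d : ℝ) + 1 - j := by
    have : j ≤ d + 1 := by omega
    push_cast [this]; ring
  have htel := sum_cos_tel a (((j : ℝ) + 2) * a) (d + 1 - j)
  rw [hm] at htel
  have harg : ((j:ℝ) + 2) * a + (2 * ((d:ℝ) + 1 - j) - 1) * a = 2 * π - ((j:ℝ) + 1) * a := by
    rw [ha]; field_simp; ring
  have h2 : sin (((j:ℝ) + 2) * a + (2 * ((d:ℝ) + 1 - j) - 1) * a) = - sin (((j:ℝ)+1) * a) := by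
    rw [harg, sin_sub, sin_two_pi, cos_two_pi]; ring
  rw [h2, show ((j:ℝ) + 2) * a - a = ((j:ℝ) + 1) * a by ring] at htel
  have hS : ∑ l ∈ Finset.range (d + 1 - j), cos (((j:ℝ) + 2) * a + 2 * l * a)
      = - sin (((j:ℝ) + 1) * a) / sin a := by
    rw [eq_div_iff hsa]
    linear_combination htel / 2
  have expand : ∀ l ∈ Finset.range (d + 1 - j),
      sin ((l + 1) * a) * sin ((l + 1 + j) * a)
        = cos ((j:ℝ) * a) / 2 - cos (((j:ℝ) + 2) * a + 2 * l * a) / 2 := by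
    intro l _
    have hpts := Real.cos_sub_cos ((j:ℝ) * a) (((j:ℝ) + 2) * a + 2 * l * a)
    rw [show ((j:ℝ) * a + (((j:ℝ) + 2) * a + 2 * l * a)) / 2 = ((l:ℝ) + 1 + j) * a by ring,
        show ((j:ℝ) * a - (((j:ℝ) + 2) * a + 2 * l * a)) / 2 = -(((l:ℝ) + 1) * a) by ring,
        sin_neg] at hpts
    linear_combination -hpts / 2
  rw [Finset.sum_congr rfl expand, Finset.sum_sub_distrib, Finset.sum_const,
      ← Finset.sum_div, hS, Finset.card_range, nsmul_eq_mul, hm, jacksonDamp, ← ha]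
  have hd2 : ((d:ℝ) + 2) ≠ 0 := by positivity
  field_simp
  ring

private lemma double_sum_symm (n : ℕ) (F : ℕ → ℕ → ℝ) (hs : ∀ k l, F k l = F l k) :
    ∑ k ∈ Finset.range n, ∑ l ∈ Finset.range n, F k l
      = ∑ k ∈ Finset.range n, F k k
        + 2 * ∑ k ∈ Finset.range n, ∑ l ∈ Finset.range k, F k l := by
  induction n with
  | zero => simp
  | succ n ih =>
    rw [Finset.sum_range_succ (f := fun k => ∑ l ∈ Finset.range (n+1), F k l),
        Finset.sum_range_succ (f := fun k => F k k),
        Finset.sum_range_succ (f := fun k => ∑ l ∈ Finset.range k, F k l),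
        Finset.sum_range_succ (f := fun l => F n l)]
    have h1 : ∑ k ∈ Finset.range n, ∑ l ∈ Finset.range (n+1), F k l
        = (∑ k ∈ Finset.range n, ∑ l ∈ Finset.range n, F k l)
          + ∑ k ∈ Finset.range n, F k n := by
      rw [← Finset.sum_add_distrib]
      exact Finset.sum_congr rfl fun k _ => Finset.sum_range_succ _ _
    have h2 : ∑ k ∈ Finset.range n, F k n = ∑ l ∈ Finset.range n, F n l :=
      Finset.sum_congr rfl fun k _ => hs k n
    rw [h1, ih, h2]
    ring

private lemma offdiag_reindex (n : ℕ) (F : ℕ → ℕ → ℝ) :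
    ∑ k ∈ Finset.range (n + 1), ∑ l ∈ Finset.range k, F k l
      = ∑ j ∈ Finset.range n, ∑ l ∈ Finset.range (n - j), F (l + j + 1) l := by
  rw [Finset.sum_sigma', Finset.sum_sigma']
  apply Finset.sum_nbij' (i := fun p => (⟨p.1 - p.2 - 1, p.2⟩ : Σ _ : ℕ, ℕ))
    (j := fun p => (⟨p.2 + p.1 + 1, p.2⟩ : Σ _ : ℕ, ℕ))
  · intro p hp
    simp only [Finset.mem_sigma, Finset.mem_range] at hp ⊢
    omega
  · intro p hp
    simp only [Finset.mem_sigma, Finset.mem_range] at hp ⊢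
    omega
  · intro p hp
    obtain ⟨k, l⟩ := p
    simp only [Finset.mem_sigma, Finset.mem_range] at hp
    show (⟨l + (k - l - 1) + 1, l⟩ : Σ _ : ℕ, ℕ) = ⟨k, l⟩
    have h : l + (k - l - 1) + 1 = k := by omega
    rw [h]
  · intro p hp
    obtain ⟨j, l⟩ := p
    simp only [Finset.mem_sigma, Finset.mem_range] at hp
    show (⟨l + j + 1 - l - 1, l⟩ : Σ _ : ℕ, ℕ) = ⟨j, l⟩
    have h : l + j + 1 - l - 1 = j := by omega
    rw [h]
  · intro p hp
    obtain ⟨k, l⟩ := p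
    simp only [Finset.mem_sigma, Finset.mem_range] at hp
    show F k l = F (l + (k - l - 1) + 1) l
    have h : l + (k - l - 1) + 1 = k := by omega
    rw [h]

/-- for every `d ≥ 2` and every real `φ`, `u_d(φ) ≥ 0`. -/
theorem jacksonKernel_nonneg (d : ℕ) (hd : 2 ≤ d) (φ : ℝ) :
    0 ≤ jacksonKernel d φ := by
  set b : ℕ → ℝ := fun k => sin ((k + 1) * (π / (d + 2))) with hb
  set F : ℕ → ℕ → ℝ := fun k l => b k * b l * cos (((k:ℝ) - l) * φ) with hF
  set C : ℝ := ∑ k ∈ Finset.range (d + 1), b k * cos (k * φ) with hC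
  set S : ℝ := ∑ k ∈ Finset.range (d + 1), b k * sin (k * φ) with hS
  have hsymm : ∀ k l, F k l = F l k := by
    intro k l
    simp only [hF]
    rw [show ((l:ℝ) - k) * φ = -(((k:ℝ) - l) * φ) by ring, cos_neg]
    ring
  -- Step 1: C² + S² equals the double sum
  have hCS : C ^ 2 + S ^ 2
      = ∑ k ∈ Finset.range (d + 1), ∑ l ∈ Finset.range (d + 1), F k l := by
    rw [hC, hS, pow_two, pow_two, Finset.sum_mul_sum, Finset.sum_mul_sum,
        ← Finset.sum_add_distrib]
    apply Finset.sum_congr rfl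
    intro k _
    rw [← Finset.sum_add_distrib]
    apply Finset.sum_congr rfl
    intro l _
    simp only [hF]
    rw [show ((k:ℝ) - l) * φ = (k:ℝ) * φ - (l:ℝ) * φ by ring, cos_sub]
    ring
  -- Step 2: diagonal sum
  have hdiag : ∑ k ∈ Finset.range (d + 1), F k k = ((d : ℝ) + 2) / 2 := by
    rw [← sumA d]
    apply Finset.sum_congr rfl
    intro k _
    simp only [hF, hb]
    rw [sub_self, zero_mul, cos_zero]
    ring
  -- Step 3: off-diagonal sum
  have hoff : ∑ k ∈ Finset.range (d + 1), ∑ l ∈ Finset.range k, F k l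
      = ∑ j ∈ Finset.range d, cos (((j:ℝ) + 1) * φ) * (((d : ℝ) + 2) / 2 * jacksonDamp d (j + 1)) := by
    rw [offdiag_reindex d F]
    apply Finset.sum_congr rfl
    intro j hj
    rw [Finset.mem_range] at hj
    have hsB := sumB d (j + 1) (by omega)
    rw [show d + 1 - (j + 1) = d - j by omega] at hsB
    rw [← hsB, Finset.mul_sum]
    apply Finset.sum_congr rfl
    intro l _
    simp only [hF, hb]
    have e1 : ((l + j + 1 : ℕ) : ℝ) = (l : ℝ) + j + 1 := by push_cast; ring
    rw [e1]
    rw [show ((l:ℝ) + j + 1 - l) * φ = ((j:ℝ) + 1) * φ by ring]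
    have e2 : ((l:ℝ) + j + 1 + 1) * (π / (d + 2)) = ((l:ℝ) + 1 + (j + 1)) * (π / (d + 2)) := by ring
    have e3 : (((j:ℝ) + 1) + 1) = ((j:ℝ) + 2) := by ring
    push_cast
    ring
  -- Step 4: relate kernel to sum over range
  have hker : jacksonKernel d φ
      = 1 / 2 + ∑ j ∈ Finset.range d, jacksonDamp d (j + 1) * cos (((j:ℝ) + 1) * φ) := by
    rw [jacksonKernel]
    congr 1
    apply Finset.sum_nbij' (i := fun j => j - 1) (j := fun j => j + 1)
    · intro x hx
      simp only [Finset.mem_Icc, Finset.mem_range] at hx ⊢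
      omega
    · intro x hx
      simp only [Finset.mem_Icc, Finset.mem_range] at hx ⊢
      omega
    · intro x hx
      simp only [Finset.mem_Icc] at hx
      omega
    · intro x _
      omega
    · intro x hx
      simp only [Finset.mem_Icc] at hx
      have h : x - 1 + 1 = x := by omega
      have h2 : ((x - 1 : ℕ) : ℝ) + 1 = (x : ℝ) := by
        push_cast [hx.1]; ring
      rw [h, h2]
  -- Combine
  have key : C ^ 2 + S ^ 2 = ((d : ℝ) + 2) * jacksonKernel d φ := by
    rw [hCS, double_sum_symm _ F hsymm, hdiag, hoff, hker, mul_add, Finset.mul_sum,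
        Finset.mul_sum]
    congr 1
    · ring
    · exact Finset.sum_congr rfl fun j _ => by ring
  nlinarith [sq_nonneg C, sq_nonneg S, key]
end

section
/- For every integer d ≥ 2, (1/π)·∫_{−π}^{π} |φ|·u_d(φ) dφ ≤ π²/(2(d+2)). -/
open Real

namespace JacksonAux

/-- Telescoping sum of cosines in arithmetic progression. -/
lemma sum_cos_arith (a b : ℝ) (n : ℕ) :
    2 * Real.sin b * ∑ l ∈ Finset.range n, Real.cos (a + 2 * l * b)
      = Real.sin (a + (2 * n - 1) * b) - Real.sin (a - b) := by
  induction n with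
  | zero =>
      simp only [Finset.range_zero, Finset.sum_empty, mul_zero, Nat.cast_zero]
      rw [show a + ((0:ℝ) - 1) * b = a - b by ring]
      ring
  | succ n ih =>
      rw [Finset.sum_range_succ, mul_add, ih]
      have h1 : a + (2 * ((n+1:ℕ):ℝ) - 1) * b = (a + 2 * n * b) + b := by push_cast; ring
      have h2 : a + (2 * (n:ℝ) - 1) * b = (a + 2 * n * b) - b := by push_cast; ring
      rw [h1, h2, Real.sin_add, Real.sin_sub]
      ring

/-- Splitting a symmetric double sum into diagonal and twice the sub-diagonal part. -/
lemma double_sum_split (g : ℕ → ℕ → ℝ) (hsym : ∀ k l, g k l = g l k) (n : ℕ) :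
    ∑ k ∈ Finset.range n, ∑ l ∈ Finset.range n, g k l
      = (∑ k ∈ Finset.range n, g k k)
        + 2 * ∑ j ∈ Finset.range n, ∑ l ∈ Finset.range (n - (j+1)), g (l + (j+1)) l := by
  induction n with
  | zero => simp
  | succ n ih =>
      have hL : ∑ k ∈ Finset.range (n+1), ∑ l ∈ Finset.range (n+1), g k l
          = (∑ k ∈ Finset.range n, ∑ l ∈ Finset.range n, g k l)
            + 2 * (∑ l ∈ Finset.range n, g n l) + g n n := by
        rw [Finset.sum_range_succ]
        have h : ∑ k ∈ Finset.range n, ∑ l ∈ Finset.range (n+1), g k l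
            = (∑ k ∈ Finset.range n, ∑ l ∈ Finset.range n, g k l)
              + ∑ k ∈ Finset.range n, g n k := by
          rw [← Finset.sum_add_distrib]
          exact Finset.sum_congr rfl fun k _ => by rw [Finset.sum_range_succ, hsym k n]
        rw [h, Finset.sum_range_succ]
        ring
      have hD : ∑ k ∈ Finset.range (n+1), g k k
          = (∑ k ∈ Finset.range n, g k k) + g n n := Finset.sum_range_succ _ _
      have hR : ∑ j ∈ Finset.range (n+1), ∑ l ∈ Finset.range (n + 1 - (j+1)), g (l + (j+1)) l
          = (∑ j ∈ Finset.range n, ∑ l ∈ Finset.range (n - (j+1)), g (l + (j+1)) l)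
            + ∑ l ∈ Finset.range n, g n l := by
        rw [Finset.sum_range_succ]
        simp only [Nat.sub_self, Finset.range_zero, Finset.sum_empty, add_zero]
        have h : ∑ j ∈ Finset.range n, ∑ l ∈ Finset.range (n + 1 - (j+1)), g (l + (j+1)) l
            = (∑ j ∈ Finset.range n, ∑ l ∈ Finset.range (n - (j+1)), g (l + (j+1)) l)
              + ∑ j ∈ Finset.range n, g n (n - 1 - j) := by
          rw [← Finset.sum_add_distrib]
          refine Finset.sum_congr rfl fun j hj => ?_
          rw [Finset.mem_range] at hj
          have e1 : n + 1 - (j+1) = (n - (j+1)) + 1 := by omega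
          rw [e1, Finset.sum_range_succ]
          congr 2 <;> omega
        rw [h, Finset.sum_range_reflect (fun l => g n l) n]
      rw [hL, hD, hR, ih]
      ring


lemma sinA_pos (d : ℕ) : 0 < Real.sin (π / ((d:ℝ) + 2)) := by
  apply Real.sin_pos_of_pos_of_lt_pi
  · positivity
  · have h1 : (1:ℝ) < (d:ℝ) + 2 := by
      have : (0:ℝ) ≤ (d:ℝ) := Nat.cast_nonneg d
      linarith
    exact div_lt_self Real.pi_pos h1

lemma piA (d : ℕ) : ((d:ℝ) + 2) * (π / ((d:ℝ) + 2)) = π := by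
  have : ((d:ℝ) + 2) ≠ 0 := by positivity
  field_simp

/-- `Σ_{k=0}^d sin²((k+1)α) = (d+2)/2`. -/
lemma sumsq (d : ℕ) :
    ∑ k ∈ Finset.range (d+1), Real.sin (((k:ℝ)+1) * (π / ((d:ℝ)+2)))^2 = ((d:ℝ)+2)/2 := by
  set A := π / ((d:ℝ)+2) with hA
  have hs := sinA_pos d
  have hpi : ((d:ℝ) + 2) * A = π := piA d
  have hsum := sum_cos_arith (2*A) A (d+1)
  have e1 : 2*A + (2 * ((d+1:ℕ):ℝ) - 1) * A = 2*π - A := by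
    push_cast
    linear_combination (2:ℝ) * hpi
  have e3 : 2*A - A = A := by ring
  rw [e1, e3] at hsum
  have e2 : Real.sin (2*π - A) = - Real.sin A := by
    rw [show 2*π - A = -A + 2*π by ring, Real.sin_add_two_pi, Real.sin_neg]
  rw [e2] at hsum
  have hcos : ∑ l ∈ Finset.range (d+1), Real.cos (2*A + 2*l*A) = -1 := by
    have h2s : 2 * Real.sin A ≠ 0 := by positivity
    apply mul_left_cancel₀ h2s
    rw [hsum]; ring
  have hterm : ∀ k ∈ Finset.range (d+1),
      Real.sin (((k:ℝ)+1)*A)^2 = 1/2 - Real.cos (2*A + 2*k*A)/2 := by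
    intro k _
    rw [Real.sin_sq_eq_half_sub]
    congr 2
    ring
  rw [Finset.sum_congr rfl hterm, Finset.sum_sub_distrib, Finset.sum_const, ← Finset.sum_div,
    hcos]
  simp
  ring

/-- `2 Σ_{l=0}^{d-j} sin((l+j+1)α) sin((l+1)α) = (d+2) ρ_{j,d}`. -/
lemma damp_eq (d j : ℕ) (hj1 : 1 ≤ j) (hjd : j ≤ d) :
    2 * ∑ l ∈ Finset.range (d+1-j),
        Real.sin ((((l+j : ℕ):ℝ)+1) * (π / ((d:ℝ)+2))) * Real.sin (((l:ℝ)+1) * (π / ((d:ℝ)+2)))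
      = ((d:ℝ)+2) * jacksonDamp d j := by
  set A := π / ((d:ℝ)+2) with hA
  have hs := sinA_pos d
  have hpi : ((d:ℝ) + 2) * A = π := piA d
  have hsum := sum_cos_arith (((j:ℝ)+2)*A) A (d+1-j)
  have hcard : ((d+1-j : ℕ):ℝ) = (d:ℝ) + 1 - j := by
    have : j ≤ d + 1 := by omega
    push_cast [this]
    ring
  have e1 : ((j:ℝ)+2)*A + (2 * ((d+1-j:ℕ):ℝ) - 1) * A = 2*π - ((j:ℝ)+1)*A := by
    rw [hcard]
    linear_combination (2:ℝ) * hpi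
  have e3 : ((j:ℝ)+2)*A - A = ((j:ℝ)+1)*A := by ring
  rw [e1, e3] at hsum
  have e2 : Real.sin (2*π - ((j:ℝ)+1)*A) = - Real.sin (((j:ℝ)+1)*A) := by
    rw [show 2*π - ((j:ℝ)+1)*A = -(((j:ℝ)+1)*A) + 2*π by ring, Real.sin_add_two_pi,
      Real.sin_neg]
  rw [e2] at hsum
  have hcos : ∑ l ∈ Finset.range (d+1-j), Real.cos (((j:ℝ)+2)*A + 2*l*A)
      = - Real.sin (((j:ℝ)+1)*A) / Real.sin A := by
    have h2s : 2 * Real.sin A ≠ 0 := by positivity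
    apply mul_left_cancel₀ h2s
    rw [hsum]
    have hsA : Real.sin A ≠ 0 := ne_of_gt hs
    field_simp
    ring
  have hterm : ∀ l ∈ Finset.range (d+1-j),
      2 * (Real.sin ((((l+j : ℕ):ℝ)+1)*A) * Real.sin (((l:ℝ)+1)*A))
        = Real.cos ((j:ℝ)*A) - Real.cos (((j:ℝ)+2)*A + 2*l*A) := by
    intro l _
    have key : ∀ x y : ℝ, Real.cos (x - y) - Real.cos (x + y) = 2 * (Real.sin x * Real.sin y) := by
      intro x y
      rw [Real.cos_sub, Real.cos_add]
      ring
    have := key ((((l+j : ℕ):ℝ)+1)*A) (((l:ℝ)+1)*A)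
    rw [← this]
    push_cast
    congr 2 <;> ring
  rw [Finset.mul_sum, Finset.sum_congr rfl hterm, Finset.sum_sub_distrib, Finset.sum_const,
    hcos, Finset.card_range]
  simp only [nsmul_eq_mul]
  rw [hcard, jacksonDamp, ← hA]
  have hd2 : ((d:ℝ)+2) ≠ 0 := by positivity
  field_simp
  ring


/-- The Jackson kernel is a sum of two squares over `d+2`. -/
lemma kernel_eq (d : ℕ) (φ : ℝ) :
    ((d:ℝ)+2) * jacksonKernel d φ
      = (∑ k ∈ Finset.range (d+1), Real.sin (((k:ℝ)+1) * (π/((d:ℝ)+2))) * Real.cos (k*φ))^2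
        + (∑ k ∈ Finset.range (d+1), Real.sin (((k:ℝ)+1) * (π/((d:ℝ)+2))) * Real.sin (k*φ))^2
    := by
  set A := π / ((d:ℝ)+2) with hA
  set g : ℕ → ℕ → ℝ := fun k l =>
    Real.sin (((k:ℝ)+1)*A) * Real.sin (((l:ℝ)+1)*A) * Real.cos ((k:ℝ)*φ - (l:ℝ)*φ) with hg
  have hsym : ∀ k l, g k l = g l k := by
    intro k l
    simp only [hg]
    rw [show (l:ℝ)*φ - (k:ℝ)*φ = -((k:ℝ)*φ - (l:ℝ)*φ) by ring, Real.cos_neg]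
    ring
  have hexp : (∑ k ∈ Finset.range (d+1), Real.sin (((k:ℝ)+1)*A) * Real.cos (k*φ))^2
        + (∑ k ∈ Finset.range (d+1), Real.sin (((k:ℝ)+1)*A) * Real.sin (k*φ))^2
      = ∑ k ∈ Finset.range (d+1), ∑ l ∈ Finset.range (d+1), g k l := by
    rw [sq, sq, Finset.sum_mul_sum, Finset.sum_mul_sum, ← Finset.sum_add_distrib]
    refine Finset.sum_congr rfl fun k _ => ?_
    rw [← Finset.sum_add_distrib]
    refine Finset.sum_congr rfl fun l _ => ?_
    simp only [hg]
    rw [Real.cos_sub]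
    ring
  rw [hexp, double_sum_split g hsym (d+1)]
  have hdiag : ∑ k ∈ Finset.range (d+1), g k k = ((d:ℝ)+2)/2 := by
    rw [← sumsq d]
    refine Finset.sum_congr rfl fun k _ => ?_
    simp only [hg, sub_self, Real.cos_zero]
    ring
  have hoff : ∑ j ∈ Finset.range (d+1), ∑ l ∈ Finset.range (d+1 - (j+1)), g (l + (j+1)) l
      = ∑ j ∈ Finset.Icc 1 d, (((d:ℝ)+2) * jacksonDamp d j / 2) * Real.cos ((j:ℝ)*φ) := by
    rw [Finset.sum_range_succ]
    simp only [Nat.sub_self, Finset.range_zero, Finset.sum_empty, add_zero]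
    rw [show Finset.Icc 1 d = Finset.Ico 1 (d+1) from (Finset.Ico_add_one_right_eq_Icc 1 d).symm,
      Finset.sum_Ico_eq_sum_range]
    simp only [Nat.add_sub_cancel]
    refine Finset.sum_congr rfl fun j hj => ?_
    rw [Finset.mem_range] at hj
    have hj1 : 1 ≤ 1 + j := by omega
    have hjd : 1 + j ≤ d := by omega
    have step : ∑ l ∈ Finset.range (d+1 - (j+1)), g (l + (j+1)) l
        = (∑ l ∈ Finset.range (d+1 - (1+j)),
            Real.sin ((((l+(1+j) : ℕ):ℝ)+1) * A) * Real.sin (((l:ℝ)+1) * A))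
          * Real.cos (((1+j : ℕ):ℝ)*φ) := by
      rw [Finset.sum_mul]
      refine Finset.sum_congr (by rw [show j+1 = 1+j by omega]) fun l hl => ?_
      simp only [hg]
      rw [show j+1 = 1+j by omega]
      rw [show ((l + (1+j) : ℕ):ℝ)*φ - (l:ℝ)*φ = ((1+j : ℕ):ℝ)*φ by push_cast; ring]
    rw [step]
    have := damp_eq d (1+j) hj1 hjd
    rw [← hA] at this
    have h2 : (∑ l ∈ Finset.range (d+1 - (1+j)),
        Real.sin ((((l+(1+j) : ℕ):ℝ)+1) * A) * Real.sin (((l:ℝ)+1) * A))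
        = ((d:ℝ)+2) * jacksonDamp d (1+j) / 2 := by linarith
    rw [h2]
  rw [hdiag, hoff, jacksonKernel, mul_add, Finset.mul_sum]
  rw [Finset.mul_sum]
  have : ∀ j ∈ Finset.Icc 1 d,
      ((d:ℝ)+2) * (jacksonDamp d j * Real.cos ((j:ℝ)*φ))
        = 2 * ((((d:ℝ)+2) * jacksonDamp d j / 2) * Real.cos ((j:ℝ)*φ)) := by
    intro j _
    ring
  rw [Finset.sum_congr rfl this, ← Finset.mul_sum]
  ring

lemma kernel_nonneg (d : ℕ) (φ : ℝ) : 0 ≤ jacksonKernel d φ := by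
  have h := kernel_eq d φ
  have h2 : (0:ℝ) < (d:ℝ)+2 := by positivity
  have h3 : 0 ≤ ((d:ℝ)+2) * jacksonKernel d φ := by
    rw [h]
    positivity
  exact nonneg_of_mul_nonneg_right h3 h2


lemma cont_kernel (d : ℕ) : Continuous (jacksonKernel d) := by
  have : Continuous fun φ : ℝ =>
      1/2 + ∑ j ∈ Finset.Icc 1 d, jacksonDamp d j * Real.cos ((j:ℝ)*φ) :=
    continuous_const.add (continuous_finset_sum _ fun j _ => by fun_prop)
  exact this

lemma integral_cos_smul (c : ℝ) (hc : c ≠ 0) :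
    ∫ φ in (-π)..π, Real.cos (c*φ) = 2 * Real.sin (c*π) / c := by
  rw [intervalIntegral.integral_comp_mul_left (fun x => Real.cos x) hc, integral_cos]
  rw [mul_neg, Real.sin_neg, smul_eq_mul]
  field_simp
  ring

lemma integral_cos_nat (j : ℕ) (hj : 1 ≤ j) : ∫ φ in (-π)..π, Real.cos ((j:ℝ)*φ) = 0 := by
  rw [integral_cos_smul (j:ℝ) (Nat.cast_ne_zero.mpr (by omega)), Real.sin_nat_mul_pi]
  simp

lemma integral_kernel (d : ℕ) : ∫ φ in (-π)..π, jacksonKernel d φ = π := by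
  simp only [jacksonKernel]
  rw [intervalIntegral.integral_add intervalIntegrable_const
      (((continuous_finset_sum _ fun j _ => by fun_prop :
        Continuous fun φ : ℝ => ∑ j ∈ Finset.Icc 1 d,
          jacksonDamp d j * Real.cos ((j:ℝ)*φ))).intervalIntegrable _ _),
    intervalIntegral.integral_finset_sum
      (fun j _ => ((by fun_prop : Continuous fun φ : ℝ =>
        jacksonDamp d j * Real.cos ((j:ℝ)*φ))).intervalIntegrable _ _)]
  have hz : ∀ j ∈ Finset.Icc 1 d,
      (∫ φ in (-π)..π, jacksonDamp d j * Real.cos ((j:ℝ)*φ)) = 0 := by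
    intro j hj
    rw [Finset.mem_Icc] at hj
    rw [intervalIntegral.integral_const_mul, integral_cos_nat j hj.1, mul_zero]
  rw [Finset.sum_congr rfl hz]
  simp
  ring

lemma integral_cos_cos (j : ℕ) (hj : 1 ≤ j) :
    ∫ φ in (-π)..π, Real.cos φ * Real.cos ((j:ℝ)*φ) = if j = 1 then π else 0 := by
  rcases eq_or_ne j 1 with rfl | hne
  · rw [if_pos rfl]
    simp_rw [Nat.cast_one, one_mul, ← sq]
    rw [integral_cos_sq]
    simp [Real.sin_pi, Real.sin_neg]
  · rw [if_neg hne]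
    have h2 : 2 ≤ j := by omega
    have hprod : ∀ φ : ℝ, Real.cos φ * Real.cos ((j:ℝ)*φ)
        = (1/2) * Real.cos (((j:ℝ)+1)*φ) + (1/2) * Real.cos (((j:ℝ)-1)*φ) := by
      intro φ
      rw [show ((j:ℝ)+1)*φ = (j:ℝ)*φ + φ by ring, show ((j:ℝ)-1)*φ = (j:ℝ)*φ - φ by ring,
        Real.cos_add, Real.cos_sub]
      ring
    simp_rw [hprod]
    rw [intervalIntegral.integral_add
        (((by fun_prop : Continuous fun φ : ℝ => (1/2) * Real.cos (((j:ℝ)+1)*φ))).intervalIntegrable _ _)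
        (((by fun_prop : Continuous fun φ : ℝ => (1/2) * Real.cos (((j:ℝ)-1)*φ))).intervalIntegrable _ _),
      intervalIntegral.integral_const_mul, intervalIntegral.integral_const_mul]
    have e1 : ((j:ℝ)+1) = ((j+1 : ℕ) : ℝ) := by push_cast; ring
    have e2 : ((j:ℝ)-1) = ((j-1 : ℕ) : ℝ) := by
      have : (1:ℕ) ≤ j := hj
      push_cast [this]
      ring
    rw [e1, e2, integral_cos_nat (j+1) (by omega), integral_cos_nat (j-1) (by omega)]
    ring

lemma damp_one (d : ℕ) : jacksonDamp d 1 = Real.cos (π/((d:ℝ)+2)) := by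
  rw [jacksonDamp]
  have hs := sinA_pos d
  have h2 : ((d:ℝ)+2) ≠ 0 := by positivity
  rw [show (((1:ℕ):ℝ)+1) * (π/((d:ℝ)+2)) = 2*(π/((d:ℝ)+2)) by push_cast; ring,
    Real.sin_two_mul,
    show ((1:ℕ):ℝ) * (π/((d:ℝ)+2)) = π/((d:ℝ)+2) by push_cast; ring]
  field_simp
  ring

lemma integral_cos_mul_kernel (d : ℕ) :
    ∫ φ in (-π)..π, Real.cos φ * jacksonKernel d φ = π * Real.cos (π/((d:ℝ)+2)) := by
  simp only [jacksonKernel]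
  have hrw : ∀ φ : ℝ,
      Real.cos φ * (1/2 + ∑ j ∈ Finset.Icc 1 d, jacksonDamp d j * Real.cos ((j:ℝ)*φ))
        = (1/2) * Real.cos φ
          + ∑ j ∈ Finset.Icc 1 d, jacksonDamp d j * (Real.cos φ * Real.cos ((j:ℝ)*φ)) := by
    intro φ
    rw [mul_add, Finset.mul_sum]
    congr 1
    · ring
    · exact Finset.sum_congr rfl fun j _ => by ring
  simp_rw [hrw]
  rw [intervalIntegral.integral_add
      (((by fun_prop : Continuous fun φ : ℝ => (1/2) * Real.cos φ)).intervalIntegrable _ _)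
      (((continuous_finset_sum _ fun j _ => by fun_prop :
        Continuous fun φ : ℝ => ∑ j ∈ Finset.Icc 1 d,
          jacksonDamp d j * (Real.cos φ * Real.cos ((j:ℝ)*φ)))).intervalIntegrable _ _),
    intervalIntegral.integral_finset_sum
      (fun j _ => ((by fun_prop : Continuous fun φ : ℝ =>
        jacksonDamp d j * (Real.cos φ * Real.cos ((j:ℝ)*φ)))).intervalIntegrable _ _)]
  have hterm : ∀ j ∈ Finset.Icc 1 d,
      (∫ φ in (-π)..π, jacksonDamp d j * (Real.cos φ * Real.cos ((j:ℝ)*φ)))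
        = if j = 1 then jacksonDamp d 1 * π else 0 := by
    intro j hj
    rw [Finset.mem_Icc] at hj
    rw [intervalIntegral.integral_const_mul, integral_cos_cos j hj.1]
    rcases eq_or_ne j 1 with rfl | hne
    · rw [if_pos rfl, if_pos rfl]
    · rw [if_neg hne, if_neg hne, mul_zero]
  rw [Finset.sum_congr rfl hterm, Finset.sum_ite_eq' _ 1 _]
  have h1d : 1 ∈ Finset.Icc 1 d ∨ d = 0 := by
    rcases Nat.eq_zero_or_pos d with h | h
    · exact Or.inr h
    · exact Or.inl (Finset.mem_Icc.mpr ⟨le_refl 1, h⟩)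
  rw [intervalIntegral.integral_const_mul, integral_cos]
  rcases h1d with h | h
  · rw [if_pos h, damp_one]
    simp [Real.sin_pi, Real.sin_neg]
    ring
  · subst h
    simp [Real.sin_pi, Real.sin_neg]

end JacksonAux

/-- `(1/π)·∫_{−π}^{π} |φ|·u_d(φ) dφ ≤ π²/(2(d+2))` for `d ≥ 2`. -/
theorem jacksonKernel_first_moment (d : ℕ) (hd : 2 ≤ d) :
    (1 / π) * ∫ φ in (-π)..π, |φ| * jacksonKernel d φ ≤ π ^ 2 / (2 * (d + 2)) := by
  have hπ : (0:ℝ) < π := Real.pi_pos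
  set A : ℝ := π / ((d:ℝ)+2) with hA
  have hd2 : (0:ℝ) < (d:ℝ)+2 := by positivity
  have hA0 : 0 < A := by positivity
  have hAπ : A < π := div_lt_self hπ (by have := Nat.cast_nonneg (α := ℝ) d; linarith)
  set s : ℝ := Real.sin (A/2) with hsdef
  have hs0 : 0 < s := Real.sin_pos_of_pos_of_lt_pi (by positivity) (by linarith)
  have hcont := JacksonAux.cont_kernel d
  -- the comparison function
  set g : ℝ → ℝ := fun φ => π * ((1 - Real.cos φ)/(4*s) + s/2) with hgdef
  have hgcont : Continuous g := by
    apply continuous_const.mul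
    exact ((continuous_const.sub Real.continuous_cos).div_const _).add continuous_const
  -- pointwise bound on [-π, π]
  have hpt : ∀ x ∈ Set.Icc (-π) π, |x| * jacksonKernel d x ≤ g x * jacksonKernel d x := by
    intro x hx
    have hxabs : |x| ≤ π := abs_le.mpr ⟨hx.1, hx.2⟩
    apply mul_le_mul_of_nonneg_right _ (JacksonAux.kernel_nonneg d x)
    set t : ℝ := Real.sin (|x|/2) with htdef
    have h1 : |x| ≤ π * t := by
      have := Real.mul_le_sin (x := |x|/2) (by positivity) (by linarith)
      rw [← htdef] at this
      have h2 : 2/π * (|x|/2) = |x|/π := by field_simp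
      rw [h2] at this
      calc |x| = π * (|x|/π) := by field_simp
        _ ≤ π * t := by exact mul_le_mul_of_nonneg_left this (le_of_lt hπ)
    have h2 : t^2 = (1 - Real.cos x)/2 := by
      rw [htdef, Real.sin_sq_eq_half_sub, show 2*(|x|/2) = |x| by ring, Real.cos_abs]
      ring
    have h3 : t ≤ t^2/(2*s) + s/2 := by
      rw [div_add_div _ _ (by positivity) (by norm_num : (2:ℝ) ≠ 0), le_div_iff₀ (by positivity)]
      nlinarith [sq_nonneg (t - s)]
    calc |x| ≤ π * t := h1
      _ ≤ π * (t^2/(2*s) + s/2) := mul_le_mul_of_nonneg_left h3 (le_of_lt hπ)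
      _ = g x := by
          rw [hgdef, h2]
          have hs' : s ≠ 0 := ne_of_gt hs0
          field_simp
          ring
  -- integral comparison
  have hint1 : IntervalIntegrable (fun φ => |φ| * jacksonKernel d φ)
      MeasureTheory.volume (-π) π := (continuous_abs.mul hcont).intervalIntegrable _ _
  have hint2 : IntervalIntegrable (fun φ => g φ * jacksonKernel d φ)
      MeasureTheory.volume (-π) π := (hgcont.mul hcont).intervalIntegrable _ _
  have hmono : (∫ φ in (-π)..π, |φ| * jacksonKernel d φ)
      ≤ ∫ φ in (-π)..π, g φ * jacksonKernel d φ :=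
    intervalIntegral.integral_mono_on (by linarith) hint1 hint2 hpt
  -- value of the comparison integral
  have hval : (∫ φ in (-π)..π, g φ * jacksonKernel d φ) = π^2 * s := by
    have hs' : s ≠ 0 := ne_of_gt hs0
    have hrw : ∀ φ : ℝ, g φ * jacksonKernel d φ
        = (π/(4*s) + π*s/2) * jacksonKernel d φ
          - (π/(4*s)) * (Real.cos φ * jacksonKernel d φ) := by
      intro φ
      rw [hgdef]
      field_simp
      ring
    simp_rw [hrw]
    rw [intervalIntegral.integral_sub (f := fun φ => (π/(4*s) + π*s/2) * jacksonKernel d φ)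
        (g := fun φ => (π/(4*s)) * (Real.cos φ * jacksonKernel d φ))
        ((continuous_const.mul hcont : Continuous fun φ =>
          (π/(4*s) + π*s/2) * jacksonKernel d φ).intervalIntegrable _ _)
        ((continuous_const.mul (Real.continuous_cos.mul hcont) : Continuous fun φ =>
          (π/(4*s)) * (Real.cos φ * jacksonKernel d φ)).intervalIntegrable _ _),
      intervalIntegral.integral_const_mul, intervalIntegral.integral_const_mul,
      JacksonAux.integral_kernel d, JacksonAux.integral_cos_mul_kernel d]
    have hcosA : Real.cos A = 1 - 2*s^2 := by
      rw [show A = 2*(A/2) by ring, Real.cos_two_mul, Real.cos_sq', hsdef]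
      ring
    rw [← hA, hcosA]
    field_simp
    ring
  -- conclude
  have hs_le : s ≤ A/2 := by
    rw [hsdef]
    exact Real.sin_le (by positivity)
  calc (1 / π) * ∫ φ in (-π)..π, |φ| * jacksonKernel d φ
      ≤ (1 / π) * (π^2 * s) := by
        apply mul_le_mul_of_nonneg_left _ (by positivity)
        rw [← hval]
        exact hmono
    _ ≤ (1 / π) * (π^2 * (A/2)) := by
        apply mul_le_mul_of_nonneg_left _ (by positivity)
        exact mul_le_mul_of_nonneg_left hs_le (by positivity)
    _ = π ^ 2 / (2 * ((d:ℝ) + 2)) := by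
        rw [hA]
        field_simp
end

section
/- Suppose B = (x_i, …, x_{i+ℓ−1})^T V ∈ ℝ^{ℓ×ℓ} is nonsingular. Then v_i := V B^{−1} e_1 (e_1 the first standard basis vector of ℝ^ℓ) is the unique vector v in the column space of V satisfying x_i^T v = 1 and x_j^T v = 0 for j = i+1, …, i+ℓ−1, and for every real polynomial p of degree at most M − 1 with F_d(p)(λ_i) ≠ 0, tan∠(R(S), x_i) ≤ max_{j ∈ N_i} (|F_d(p)(λ_j)| / |F_d(p)(λ_i)|) · tan∠(v_i, x_i), where N_i = {1, 2, …, n} \ {i, …, i+ℓ−1}. -/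
open Real

/-- The step function `h` associated with the interval `[a, b]`:
`h(t) = 1` on `(a,b)`, `h(a) = h(b) = 1/2`, and `h(t) = 0` elsewhere. -/
noncomputable def stepFun (a b t : ℝ) : ℝ :=
  if t = a ∨ t = b then 1 / 2 else if t ∈ Set.Ioo a b then 1 else 0

/-- The degree-`j` Chebyshev polynomial of the first kind (real coefficients). -/
noncomputable def chebT (j : ℕ) : Polynomial ℝ := Polynomial.Chebyshev.T ℝ j

/-- The Chebyshev coefficient `c_j = (2/π)·∫_a^b p(t)·T_j(t)/√(1−t²) dt`. -/
noncomputable def chebCoef (a b : ℝ) (p : Polynomial ℝ) (j : ℕ) : ℝ :=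
  (2 / π) * ∫ t in a..b, p.eval t * (chebT j).eval t / Real.sqrt (1 - t ^ 2)

/-- The Chebyshev–Jackson series approximation of `p·h`, as a polynomial:
`F_d(p) = c_0/2 + Σ_{j=1}^d ρ_{j,d}·c_j·T_j`. -/
noncomputable def FdPoly (d : ℕ) (a b : ℝ) (p : Polynomial ℝ) : Polynomial ℝ :=
  Polynomial.C (chebCoef a b p 0 / 2) +
    ∑ j ∈ Finset.Icc 1 d, Polynomial.C (jacksonDamp d j * chebCoef a b p j) * chebT j

/-- `‖f‖_{L∞(s,t)} = sup_{x ∈ (s,t)} |f(x)|`. -/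
noncomputable def supAbs (f : ℝ → ℝ) (s t : ℝ) : ℝ :=
  sSup ((fun x => |f x|) '' Set.Ioo s t)

/-- `μ` is an eigenvalue of the matrix `A`. -/
def IsEigOf {n : ℕ} (A : Matrix (Fin n) (Fin n) ℝ) (μ : ℝ) : Prop :=
  ∃ v : Fin n → ℝ, v ≠ 0 ∧ A.mulVec v = μ • v

/-- `tan∠(u, x) = ‖u − (xᵀu)x‖ / |xᵀu|` (Euclidean norm). -/
noncomputable def tanAngle {n : ℕ} (u x : Fin n → ℝ) : ℝ :=
  Real.sqrt (dotProduct (u - dotProduct x u • x)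
      (u - dotProduct x u • x)) / |dotProduct x u|

lemma myIntAux (a b : ℝ) (ha : -1 < a) (hab : a < b) (hb : b < 1) (f : ℝ → ℝ)
    (hf : Continuous f) :
    IntervalIntegrable (fun t => f t / Real.sqrt (1 - t ^ 2)) MeasureTheory.volume a b := by
  apply ContinuousOn.intervalIntegrable
  apply ContinuousOn.div hf.continuousOn
  · exact (continuous_const.sub (continuous_pow 2)).sqrt.continuousOn
  · intro t ht
    rw [Set.uIcc_of_le hab.le] at ht
    have h1 : -1 < t := lt_of_lt_of_le ha ht.1
    have h2 : t < 1 := lt_of_le_of_lt ht.2 hb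
    exact ne_of_gt (Real.sqrt_pos.mpr (by nlinarith))

lemma chebCoef_add (a b : ℝ) (ha : -1 < a) (hab : a < b) (hb : b < 1)
    (p q : Polynomial ℝ) (j : ℕ) :
    chebCoef a b (p + q) j = chebCoef a b p j + chebCoef a b q j := by
  unfold chebCoef
  have h1 := myIntAux a b ha hab hb (fun t => p.eval t * (chebT j).eval t)
    (by exact (Polynomial.continuous_aeval p).mul (Polynomial.continuous_aeval _))
  have h2 := myIntAux a b ha hab hb (fun t => q.eval t * (chebT j).eval t)
    (by exact (Polynomial.continuous_aeval q).mul (Polynomial.continuous_aeval _))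
  rw [← mul_add, ← intervalIntegral.integral_add h1 h2]
  congr 1
  apply intervalIntegral.integral_congr
  intro t _
  simp [Polynomial.eval_add]
  ring

lemma chebCoef_smul (a b : ℝ) (c : ℝ) (p : Polynomial ℝ) (j : ℕ) :
    chebCoef a b (c • p) j = c * chebCoef a b p j := by
  unfold chebCoef
  rw [show (∫ t in a..b, (c • p).eval t * (chebT j).eval t / Real.sqrt (1 - t ^ 2))
      = ∫ t in a..b, c * (p.eval t * (chebT j).eval t / Real.sqrt (1 - t ^ 2)) from
    intervalIntegral.integral_congr (fun t _ => by simp [smul_eq_mul]; ring),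
    intervalIntegral.integral_const_mul]
  ring

lemma chebCoef_zero (a b : ℝ) (j : ℕ) : chebCoef a b 0 j = 0 := by
  unfold chebCoef
  simp

lemma FdPoly_add (d : ℕ) (a b : ℝ) (ha : -1 < a) (hab : a < b) (hb : b < 1)
    (p q : Polynomial ℝ) :
    FdPoly d a b (p + q) = FdPoly d a b p + FdPoly d a b q := by
  unfold FdPoly
  simp only [chebCoef_add a b ha hab hb, mul_add, add_div, Polynomial.C_add, add_mul,
    Finset.sum_add_distrib]
  ring

lemma FdPoly_smul (d : ℕ) (a b : ℝ) (c : ℝ) (p : Polynomial ℝ) :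
    FdPoly d a b (c • p) = c • FdPoly d a b p := by
  unfold FdPoly
  simp only [chebCoef_smul]
  rw [Polynomial.smul_eq_C_mul]
  simp only [mul_add, Finset.mul_sum]
  congr 1
  · rw [← Polynomial.C_mul]
    congr 1
    ring
  · refine Finset.sum_congr rfl fun j _ => ?_
    rw [show Polynomial.C c * (Polynomial.C (jacksonDamp d j * chebCoef a b p j) * chebT j)
        = Polynomial.C (c * (jacksonDamp d j * chebCoef a b p j)) * chebT j from by
      simp only [Polynomial.C_mul]; ring]
    congr 2
    ring


lemma FdPoly_zero (d : ℕ) (a b : ℝ) : FdPoly d a b 0 = 0 := by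
  unfold FdPoly
  simp [chebCoef_zero]

lemma FdPoly_sum (d : ℕ) (a b : ℝ) (ha : -1 < a) (hab : a < b) (hb : b < 1)
    {ι : Type*} (s : Finset ι) (f : ι → Polynomial ℝ) :
    FdPoly d a b (∑ k ∈ s, f k) = ∑ k ∈ s, FdPoly d a b (f k) := by
  classical
  induction s using Finset.induction_on with
  | empty => simp [FdPoly_zero]
  | insert _ _ h ih =>
      rw [Finset.sum_insert h, Finset.sum_insert h, FdPoly_add d a b ha hab hb, ih]

lemma poly_as_sum (p : Polynomial ℝ) (M : ℕ) (h : p.natDegree < M) :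
    p = ∑ k ∈ Finset.range M, p.coeff k • (Polynomial.X : Polynomial ℝ) ^ k := by
  conv_lhs => rw [Polynomial.as_sum_range' p M h]
  exact Finset.sum_congr rfl fun k _ => (Polynomial.smul_X_eq_monomial).symm

lemma FdPoly_expand (d : ℕ) (a b : ℝ) (ha : -1 < a) (hab : a < b) (hb : b < 1)
    (p : Polynomial ℝ) (M : ℕ) (h : p.natDegree < M) :
    FdPoly d a b p = ∑ k ∈ Finset.range M, p.coeff k • FdPoly d a b (Polynomial.X ^ k) := by
  conv_lhs => rw [poly_as_sum p M h]
  rw [FdPoly_sum d a b ha hab hb]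
  exact Finset.sum_congr rfl fun k _ => FdPoly_smul d a b _ _

open Matrix in
/-- if `B = (x_i, …, x_{i+ℓ−1})ᵀV` is nonsingular then `v_i = V B⁻¹ e_1` is the
unique vector in the column space of `V` with `x_iᵀv = 1` and `x_jᵀv = 0` for
`j = i+1, …, i+ℓ−1`, and for every polynomial `p` of degree at most `M−1` with
`F_d(p)(λ_i) ≠ 0`,
`tan∠(R(S), x_i) ≤ max_{j ∈ N_i} (|F_d(p)(λ_j)|/|F_d(p)(λ_i)|) · tan∠(v_i, x_i)`.
(Indices here are 0-based: the block of indices is `{i, …, i+ℓ−1}` with `i + ℓ ≤ n`, and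
`tan∠(R(S), x_i)` is the infimum of `tan∠(u, x_i)` over `u ∈ R(S)` with `x_iᵀu ≠ 0`, the
vectors with `x_iᵀu = 0` having `tan∠(u, x_i) = +∞`.) -/
theorem tanAngle_colSpace_bound (d : ℕ) (hd : 2 ≤ d) (a b : ℝ)
    (ha : -1 < a) (hab : a < b) (hb : b < 1)
    (n M ℓ i : ℕ) (hM : 1 ≤ M) (hℓ : 0 < ℓ) (hin : i + ℓ ≤ n)
    (A : Matrix (Fin n) (Fin n) ℝ) (hA : A.IsSymm)
    (lam : Fin n → ℝ) (x : Fin n → Fin n → ℝ)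
    (heig : ∀ j, A.mulVec (x j) = lam j • x j)
    (horth : ∀ j k, dotProduct (x j) (x k) = if j = k then (1 : ℝ) else 0)
    (V : Matrix (Fin n) (Fin ℓ) ℝ)
    (B : Matrix (Fin ℓ) (Fin ℓ) ℝ)
    (hB : B = Matrix.of fun r c =>
      dotProduct (x ⟨i + r.1, by have := r.2; omega⟩) (fun m => V m c))
    (hBns : IsUnit B)
    (vi : Fin n → ℝ)
    (hvi : vi = V.mulVec (B⁻¹.mulVec (Pi.single ⟨0, hℓ⟩ 1)))
    (RS : Submodule ℝ (Fin n → ℝ))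
    (hRS : RS = Submodule.span ℝ {u | ∃ k < M, ∃ c : Fin ℓ,
      u = ((Polynomial.aeval A) (FdPoly d a b (Polynomial.X ^ k))).mulVec
        (fun m => V m c)}) :
    (dotProduct (x ⟨i, by omega⟩) vi = 1 ∧
      (∀ (j : ℕ) (_hj1 : i < j) (_hj2 : j < i + ℓ), dotProduct (x ⟨j, by omega⟩) vi = 0) ∧
      (∀ v : Fin n → ℝ, (∃ w : Fin ℓ → ℝ, v = V.mulVec w) →
        dotProduct (x ⟨i, by omega⟩) v = 1 →
        (∀ (j : ℕ) (_hj1 : i < j) (_hj2 : j < i + ℓ), dotProduct (x ⟨j, by omega⟩) v = 0) →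
        v = vi)) ∧
    (∀ p : Polynomial ℝ, p.natDegree ≤ M - 1 →
      (FdPoly d a b p).eval (lam ⟨i, by omega⟩) ≠ 0 →
      sInf {r : ℝ | ∃ u ∈ RS, dotProduct (x ⟨i, by omega⟩) u ≠ 0 ∧
          r = tanAngle u (x ⟨i, by omega⟩)} ≤
        sSup ((fun j : Fin n => |(FdPoly d a b p).eval (lam j)| /
            |(FdPoly d a b p).eval (lam ⟨i, by omega⟩)|) '' {j | j.1 < i ∨ i + ℓ ≤ j.1}) *
          tanAngle vi (x ⟨i, by omega⟩)) := by
  have hi : i < n := by omega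
  set X : Matrix (Fin n) (Fin n) ℝ := Matrix.of x with hX
  have hXapp : ∀ (v : Fin n → ℝ) (j : Fin n), X.mulVec v j = dotProduct (x j) v :=
    fun v j => rfl
  have hXXT : X * Xᵀ = 1 := by
    ext j k
    rw [Matrix.mul_apply, Matrix.one_apply, ← horth j k]
    simp [dotProduct, hX]
  have hTXX : Xᵀ * X = 1 := mul_eq_one_comm.mp hXXT
  have F1 : ∀ v : Fin n → ℝ, Xᵀ.mulVec (X.mulVec v) = v := by
    intro v; rw [Matrix.mulVec_mulVec, hTXX, Matrix.one_mulVec]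
  have F2 : ∀ c : Fin n → ℝ, X.mulVec (Xᵀ.mulVec c) = c := by
    intro c; rw [Matrix.mulVec_mulVec, hXXT, Matrix.one_mulVec]
  have F3 : ∀ v : Fin n → ℝ, dotProduct v v
      = dotProduct (X.mulVec v) (X.mulVec v) := by
    intro v
    conv_rhs => rw [dotProduct_mulVec, ← Matrix.mulVec_transpose, F1]
  have heigP : ∀ (q : Polynomial ℝ) (j : Fin n),
      ((Polynomial.aeval A) q).mulVec (x j) = q.eval (lam j) • x j := by
    intro q j
    induction q using Polynomial.induction_on' with
    | add r t hr ht => simp [Matrix.add_mulVec, hr, ht, add_smul]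
    | monomial k c =>
        have hpow : ∀ m : ℕ, (A ^ m).mulVec (x j) = lam j ^ m • x j := by
          intro m
          induction m with
          | zero => simp
          | succ m ih =>
              rw [pow_succ, ← Matrix.mulVec_mulVec, heig]
              rw [Matrix.mulVec_smul, ih, smul_smul, pow_succ, mul_comm]
        simp [Polynomial.aeval_monomial, Matrix.smul_mulVec, hpow, smul_smul,
          Polynomial.eval_monomial, Algebra.algebraMap_eq_smul_one]
  have hTsum : ∀ c : Fin n → ℝ, Xᵀ.mulVec c = ∑ j, c j • x j := by
    intro c; funext m
    simp [Matrix.mulVec, dotProduct, Matrix.transpose_apply, Finset.sum_apply,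
      mul_comm, hX]
  have F4 : ∀ (q : Polynomial ℝ) (c : Fin n → ℝ),
      ((Polynomial.aeval A) q).mulVec (Xᵀ.mulVec c)
        = Xᵀ.mulVec (fun j => q.eval (lam j) * c j) := by
    intro q c
    rw [hTsum, hTsum]
    rw [show ((Polynomial.aeval A) q).mulVec (∑ j, c j • x j)
        = ∑ j, c j • ((Polynomial.aeval A) q).mulVec (x j) from by
      simp only [← Matrix.mulVecLin_apply, map_sum, _root_.map_smul]]
    refine Finset.sum_congr rfl fun j _ => ?_
    rw [heigP, smul_smul, mul_comm (c j)]
  have hBmul : B * B⁻¹ = 1 :=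
    Matrix.mul_nonsing_inv B ((Matrix.isUnit_iff_isUnit_det B).mp hBns)
  have hBmul' : B⁻¹ * B = 1 :=
    Matrix.nonsing_inv_mul B ((Matrix.isUnit_iff_isUnit_det B).mp hBns)
  have hBdot : ∀ (w : Fin ℓ → ℝ) (r : Fin ℓ),
      dotProduct (x ⟨i + r.1, by have := r.2; omega⟩) (V.mulVec w) = B.mulVec w r := by
    intro w r
    rw [hB]
    simp only [Matrix.mulVec, dotProduct, Matrix.of_apply, Finset.mul_sum,
      Finset.sum_mul]
    rw [Finset.sum_comm]
    exact Finset.sum_congr rfl fun c _ => Finset.sum_congr rfl fun m _ => by ring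
  have hviDot : ∀ (k : ℕ) (hk : k < ℓ),
      dotProduct (x ⟨i + k, by omega⟩) vi
        = (Pi.single (⟨0, hℓ⟩ : Fin ℓ) (1:ℝ) : Fin ℓ → ℝ) ⟨k, hk⟩ := by
    intro k hk
    have h := hBdot (B⁻¹.mulVec (Pi.single (⟨0, hℓ⟩ : Fin ℓ) (1:ℝ))) ⟨k, hk⟩
    have h2 : B.mulVec (B⁻¹.mulVec (Pi.single (⟨0, hℓ⟩ : Fin ℓ) (1:ℝ)))
        = Pi.single (⟨0, hℓ⟩ : Fin ℓ) (1:ℝ) := by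
      rw [Matrix.mulVec_mulVec, hBmul, Matrix.one_mulVec]
    rw [h2] at h
    rw [hvi]
    exact h
  have claim1 : dotProduct (x ⟨i, by omega⟩) vi = 1 := by
    have h := hviDot 0 hℓ
    rw [Pi.single_eq_same] at h
    exact h
  have claim2 : ∀ (j : ℕ) (_hj1 : i < j) (_hj2 : j < i + ℓ),
      dotProduct (x ⟨j, by omega⟩) vi = 0 := by
    intro j hj1 hj2
    have h := hviDot (j - i) (by omega)
    have h2 : (⟨i + (j - i), by omega⟩ : Fin n) = ⟨j, by omega⟩ := Fin.ext (by simp; omega)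
    rw [h2] at h
    refine h.trans (Pi.single_eq_of_ne ?_ 1)
    intro hc
    have := congrArg Fin.val hc
    simp at this
    omega
  have claim3 : ∀ v : Fin n → ℝ, (∃ w : Fin ℓ → ℝ, v = V.mulVec w) →
      dotProduct (x ⟨i, by omega⟩) v = 1 →
      (∀ (j : ℕ) (_hj1 : i < j) (_hj2 : j < i + ℓ),
        dotProduct (x ⟨j, by omega⟩) v = 0) → v = vi := by
    rintro v ⟨w, rfl⟩ h1 h2
    have hBw : B.mulVec w = (Pi.single (⟨0, hℓ⟩ : Fin ℓ) (1:ℝ) : Fin ℓ → ℝ) := by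
      funext r
      rw [← hBdot w r]
      by_cases hr : r.1 = 0
      · have hr' : r = ⟨0, hℓ⟩ := Fin.ext hr
        subst hr'
        rw [Pi.single_eq_same]
        exact h1
      · rw [Pi.single_eq_of_ne (fun hc => hr (by simpa using congrArg Fin.val hc)) 1]
        have hr2 := r.2
        exact h2 (i + r.1) (by omega) (by omega)
    have hw : w = B⁻¹.mulVec (Pi.single (⟨0, hℓ⟩ : Fin ℓ) (1:ℝ)) := by
      have h3 := congrArg (fun z => B⁻¹.mulVec z) hBw
      simpa [Matrix.mulVec_mulVec, hBmul', Matrix.one_mulVec] using h3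
    rw [hw, ← hvi]
  refine ⟨⟨claim1, claim2, claim3⟩, ?_⟩
  intro p hdeg hqi
  set q : Polynomial ℝ := FdPoly d a b p with hq
  set s : Fin n → ℝ := X.mulVec vi with hs
  have hvis : vi = Xᵀ.mulVec s := (F1 vi).symm
  set u : Fin n → ℝ := ((Polynomial.aeval A) q).mulVec vi with hu
  have hXu : X.mulVec u = fun j => q.eval (lam j) * s j := by
    rw [hu, hvis, F4, F2]
  have hsj : ∀ j : Fin n, s j = dotProduct (x j) vi := fun j => rfl
  have hsi : s ⟨i, hi⟩ = 1 := by rw [hsj]; exact claim1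
  have hsblock : ∀ j : Fin n, i < j.1 → j.1 < i + ℓ → s j = 0 := by
    intro j hj1 hj2
    rw [hsj]
    exact claim2 j.1 hj1 hj2
  have hdotu : ∀ j : Fin n, dotProduct (x j) u = q.eval (lam j) * s j := by
    intro j
    rw [← hXapp u j, hXu]
  have hqine : q.eval (lam ⟨i, hi⟩) ≠ 0 := hqi
  have habs : 0 < |q.eval (lam ⟨i, hi⟩)| := abs_pos.mpr hqine
  have hxiu : dotProduct (x ⟨i, hi⟩) u = q.eval (lam ⟨i, hi⟩) := by
    rw [hdotu ⟨i, hi⟩, hsi, mul_one]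
  have hdegM : p.natDegree < M := by omega
  have hmv_sum : ∀ (N : Matrix (Fin n) (Fin n) ℝ) {ι : Type} [Fintype ι] (g : ι → Fin n → ℝ),
      N.mulVec (∑ c, g c) = ∑ c, N.mulVec (g c) := by
    intro N ι _ g
    simp only [← Matrix.mulVecLin_apply, map_sum]
  have huRS : u ∈ RS := by
    rw [hRS]
    have hqexp : q = ∑ k ∈ Finset.range M, p.coeff k • FdPoly d a b (Polynomial.X ^ k) := by
      rw [hq]; exact FdPoly_expand d a b ha hab hb p M hdegM
    have hue : u = ∑ k ∈ Finset.range M,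
        p.coeff k • ((Polynomial.aeval A) (FdPoly d a b (Polynomial.X ^ k))).mulVec vi := by
      have hsmv : ∀ (t : Finset ℕ) (f : ℕ → Matrix (Fin n) (Fin n) ℝ),
          (∑ k ∈ t, f k).mulVec vi = ∑ k ∈ t, (f k).mulVec vi := by
        intro t f
        induction t using Finset.induction_on with
        | empty => simp
        | insert _ _ hns ih => rw [Finset.sum_insert hns, Finset.sum_insert hns,
            Matrix.add_mulVec, ih]
      rw [hu, hqexp, map_sum, hsmv]
      refine Finset.sum_congr rfl fun k _ => ?_
      rw [_root_.map_smul, Matrix.smul_mulVec]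
    rw [hue]
    refine Submodule.sum_mem _ fun k hk => Submodule.smul_mem _ _ ?_
    have hvicol : vi = ∑ c : Fin ℓ,
        (B⁻¹.mulVec (Pi.single (⟨0, hℓ⟩ : Fin ℓ) (1:ℝ)) c) • (fun m => V m c) := by
      rw [hvi]; funext m
      simp [Matrix.mulVec, dotProduct, Finset.sum_apply, mul_comm]
    rw [hvicol, hmv_sum]
    refine Submodule.sum_mem _ fun c _ => ?_
    rw [Matrix.mulVec_smul]
    refine Submodule.smul_mem _ _ (Submodule.subset_span ?_)
    exact ⟨k, Finset.mem_range.mp hk, c, rfl⟩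
  have hbdd : BddBelow {r : ℝ | ∃ u' ∈ RS, dotProduct (x ⟨i, hi⟩) u' ≠ 0 ∧
      r = tanAngle u' (x ⟨i, hi⟩)} := by
    refine ⟨0, ?_⟩
    rintro r ⟨u', _, _, rfl⟩
    exact div_nonneg (Real.sqrt_nonneg _) (abs_nonneg _)
  have hmem : tanAngle u (x ⟨i, hi⟩) ∈ {r : ℝ | ∃ u' ∈ RS,
      dotProduct (x ⟨i, hi⟩) u' ≠ 0 ∧ r = tanAngle u' (x ⟨i, hi⟩)} :=
    ⟨u, huRS, by rw [hxiu]; exact hqine, rfl⟩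
  refine le_trans (csInf_le hbdd hmem) ?_
  show tanAngle u (x ⟨i, hi⟩) ≤
      sSup ((fun j : Fin n => |q.eval (lam j)| / |q.eval (lam ⟨i, hi⟩)|) ''
        {j : Fin n | j.1 < i ∨ i + ℓ ≤ j.1}) * tanAngle vi (x ⟨i, hi⟩)
  set C : ℝ := sSup ((fun j : Fin n => |q.eval (lam j)| / |q.eval (lam ⟨i, hi⟩)|) ''
      {j : Fin n | j.1 < i ∨ i + ℓ ≤ j.1}) with hC
  have hCmem : ∀ j : Fin n, (j.1 < i ∨ i + ℓ ≤ j.1) →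
      |q.eval (lam j)| ≤ C * |q.eval (lam ⟨i, hi⟩)| := by
    intro j hj
    have hle : |q.eval (lam j)| / |q.eval (lam ⟨i, hi⟩)| ≤ C :=
      le_csSup ((Set.toFinite _).image _).bddAbove ⟨j, hj, rfl⟩
    calc |q.eval (lam j)|
        = (|q.eval (lam j)| / |q.eval (lam ⟨i, hi⟩)|) * |q.eval (lam ⟨i, hi⟩)| := by
          field_simp
      _ ≤ C * |q.eval (lam ⟨i, hi⟩)| := mul_le_mul_of_nonneg_right hle (abs_nonneg _)
  have hC0 : 0 ≤ C := by
    rcases Set.eq_empty_or_nonempty {j : Fin n | j.1 < i ∨ i + ℓ ≤ j.1} with he | ⟨j0, hj0⟩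
    · rw [hC, he, Set.image_empty, Real.sSup_empty]
    · have hle : |q.eval (lam j0)| / |q.eval (lam ⟨i, hi⟩)| ≤ C :=
        le_csSup ((Set.toFinite _).image _).bddAbove ⟨j0, hj0, rfl⟩
      exact le_trans (div_nonneg (abs_nonneg _) (abs_nonneg _)) hle
  set wu : Fin n → ℝ := u - dotProduct (x ⟨i, hi⟩) u • x ⟨i, hi⟩ with hwu
  set wv : Fin n → ℝ := vi - dotProduct (x ⟨i, hi⟩) vi • x ⟨i, hi⟩ with hwv
  have hXxi : X.mulVec (x ⟨i, hi⟩) = fun j => if j = (⟨i, hi⟩ : Fin n) then (1:ℝ) else 0 := by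
    funext j; rw [hXapp, horth]
  have htu : X.mulVec wu = fun j => q.eval (lam j) * s j
      - q.eval (lam ⟨i, hi⟩) * (if j = (⟨i, hi⟩ : Fin n) then (1:ℝ) else 0) := by
    rw [hwu, Matrix.mulVec_sub, Matrix.mulVec_smul, hXu, hXxi, hxiu]
    funext j
    simp [smul_eq_mul]
  have htv : X.mulVec wv = fun j => s j - (if j = (⟨i, hi⟩ : Fin n) then (1:ℝ) else 0) := by
    rw [hwv, Matrix.mulVec_sub, Matrix.mulVec_smul, hXxi, ← hs, claim1]
    funext j
    simp [smul_eq_mul]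
  have hNu : dotProduct wu wu = ∑ j, (X.mulVec wu j) * (X.mulVec wu j) := by
    rw [F3]; rfl
  have hNv : dotProduct wv wv = ∑ j, (X.mulVec wv j) * (X.mulVec wv j) := by
    rw [F3]; rfl
  have hcoord : ∀ j : Fin n, (X.mulVec wu j) * (X.mulVec wu j)
      ≤ (C * |q.eval (lam ⟨i, hi⟩)|) ^ 2 * ((X.mulVec wv j) * (X.mulVec wv j)) := by
    intro j
    rw [htu, htv]
    by_cases hj : j = (⟨i, hi⟩ : Fin n)
    · subst hj
      simp [hsi]
    · by_cases hjJ : j.1 < i ∨ i + ℓ ≤ j.1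
      · simp only [if_neg hj, mul_zero, sub_zero]
        have hb2 := hCmem j hjJ
        have h3 : q.eval (lam j) * q.eval (lam j)
            ≤ (C * |q.eval (lam ⟨i, hi⟩)|) * (C * |q.eval (lam ⟨i, hi⟩)|) := by
          have h4 := mul_self_le_mul_self (abs_nonneg (q.eval (lam j))) hb2
          rwa [abs_mul_abs_self] at h4
        nlinarith [mul_self_nonneg (s j), mul_self_nonneg (q.eval (lam j))]
      · push_neg at hjJ
        obtain ⟨hj1, hj2⟩ := hjJ
        have hne : j.1 ≠ i := fun h => hj (Fin.ext h)
        have hs0 : s j = 0 := hsblock j (by omega) (by omega)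
        simp [hs0, if_neg hj]
  have hsum : dotProduct wu wu
      ≤ (C * |q.eval (lam ⟨i, hi⟩)|) ^ 2 * dotProduct wv wv := by
    rw [hNu, hNv, Finset.mul_sum]
    exact Finset.sum_le_sum fun j _ => hcoord j
  have hKnn : 0 ≤ C * |q.eval (lam ⟨i, hi⟩)| := mul_nonneg hC0 (abs_nonneg _)
  have hsq : Real.sqrt (dotProduct wu wu)
      ≤ C * |q.eval (lam ⟨i, hi⟩)| * Real.sqrt (dotProduct wv wv) := by
    have h1 := Real.sqrt_le_sqrt hsum
    rwa [Real.sqrt_mul (sq_nonneg _), Real.sqrt_sq hKnn] at h1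
  have htanu : tanAngle u (x ⟨i, hi⟩)
      = Real.sqrt (dotProduct wu wu) / |q.eval (lam ⟨i, hi⟩)| := by
    simp only [tanAngle]
    rw [← hwu, hxiu]
  have htanv : tanAngle vi (x ⟨i, hi⟩) = Real.sqrt (dotProduct wv wv) := by
    simp only [tanAngle]
    rw [← hwv, claim1, abs_one, div_one]
  rw [htanu, htanv, div_le_iff₀ habs]
  nlinarith [hsq]
end

section
/- There exists a real polynomial p of degree at most M − 1 with p(λ_i) ≠ 0 such that max over j ∈ {1, …, n_ev} \ {i, …, i+ℓ−1} of |p(λ_j)| / |p(λ_i)| is at most ε_i, where ε_i = κ_i / T_{M−|Ξ_i|−1}(σ_i) if 1 ≤ i ≤ n_ev − ℓ and ε_i = 0 if n_ev − ℓ + 1 ≤ i ≤ n_ev. -/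
open Real Polynomial

lemma cheb_pair {x : ℝ} (hx : 1 ≤ x) (n : ℕ) :
    1 ≤ (Polynomial.Chebyshev.T ℝ (n : ℤ)).eval x ∧
      (Polynomial.Chebyshev.T ℝ (n : ℤ)).eval x ≤
        (Polynomial.Chebyshev.T ℝ ((n : ℤ) + 1)).eval x := by
  induction n with
  | zero => simpa [Polynomial.Chebyshev.T_zero, Polynomial.Chebyshev.T_one] using hx
  | succ n ih =>
    obtain ⟨h1, h2⟩ := ih
    have h3 : (1:ℝ) ≤ (Polynomial.Chebyshev.T ℝ ((n:ℤ) + 1)).eval x := le_trans h1 h2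
    have hrec := Polynomial.Chebyshev.T_add_two ℝ (n : ℤ)
    have heval : (Polynomial.Chebyshev.T ℝ ((n:ℤ) + 2)).eval x =
        2 * x * (Polynomial.Chebyshev.T ℝ ((n:ℤ) + 1)).eval x
          - (Polynomial.Chebyshev.T ℝ (n:ℤ)).eval x := by
      rw [hrec]; simp [Polynomial.eval_mul]
    have hcast2 : ((n:ℤ) + 1) + 1 = (n : ℤ) + 2 := by ring
    push_cast
    rw [hcast2]
    constructor
    · nlinarith
    · rw [heval]; nlinarith

lemma cheb_deg_pair (n : ℕ) :
    (Polynomial.Chebyshev.T ℝ (n : ℤ)).natDegree ≤ n ∧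
      (Polynomial.Chebyshev.T ℝ ((n : ℤ) + 1)).natDegree ≤ n + 1 := by
  induction n with
  | zero =>
    constructor
    · simp [Polynomial.Chebyshev.T_zero]
    · simpa [Polynomial.Chebyshev.T_one] using Polynomial.natDegree_X_le
  | succ n ih =>
    obtain ⟨h1, h2⟩ := ih
    have hrec := Polynomial.Chebyshev.T_add_two ℝ (n : ℤ)
    have hcast2 : ((n:ℤ) + 1) + 1 = (n : ℤ) + 2 := by ring
    push_cast
    rw [hcast2]
    refine ⟨h2, ?_⟩
    rw [hrec]
    refine le_trans (Polynomial.natDegree_sub_le _ _) ?_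
    have hm : (2 * X * Polynomial.Chebyshev.T ℝ ((n:ℤ)+1)).natDegree ≤ n + 2 := by
      refine le_trans (Polynomial.natDegree_mul_le) ?_
      have : ((2 : Polynomial ℝ) * X).natDegree ≤ 1 := by
        refine le_trans (Polynomial.natDegree_mul_le) ?_
        simp
      omega
    simp only [max_le_iff]
    exact ⟨hm, by omega⟩

lemma cheb_abs_le_one {y : ℝ} (h1 : -1 ≤ y) (h2 : y ≤ 1) (n : ℕ) :
    |(Polynomial.Chebyshev.T ℝ (n : ℤ)).eval y| ≤ 1 := by
  rw [← Real.cos_arccos h1 h2, Polynomial.Chebyshev.T_real_cos]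
  exact Real.abs_cos_le_one _

lemma supAbs_bound {f : ℝ → ℝ} (hf : Continuous f) {a b : ℝ} (hab : a < b) :
    ∀ t ∈ Set.Icc a b, |f t| ≤ supAbs f a b := by
  have hbdd : BddAbove ((fun x => |f x|) '' Set.Ioo a b) := by
    have hc : IsCompact ((fun x => |f x|) '' Set.Icc a b) :=
      isCompact_Icc.image (continuous_abs.comp hf)
    exact hc.bddAbove.mono (Set.image_mono Set.Ioo_subset_Icc_self)
  have hub : ∀ x ∈ Set.Ioo a b, |f x| ≤ supAbs f a b := fun x hx =>
    le_csSup hbdd ⟨x, hx, rfl⟩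
  have hclosed : IsClosed {x : ℝ | |f x| ≤ supAbs f a b} :=
    isClosed_le (continuous_abs.comp hf) continuous_const
  have hsub : Set.Icc a b ⊆ {x : ℝ | |f x| ≤ supAbs f a b} := by
    rw [← closure_Ioo hab.ne]
    exact hclosed.closure_subset_iff.mpr hub
  exact fun t ht => hsub ht

/-- with `b ≥ λ_1 ≥ ⋯ ≥ λ_{n_ev} ≥ a`, no value repeated more than `ℓ` times,
`Ξ_i` the set of distinct values among `λ_1, …, λ_{i−1}` (with `|Ξ_i| ≤ M−1` and
`λ_{i−1} ≠ λ_i` for `i > 1`), `m_i(t) = Π_{λ∈Ξ_i}(t−λ)`, `κ_i = ‖m_i‖_{L∞(a,b)}/|m_i(λ_i)|`,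
and (for `i ≤ n_ev−ℓ`, where `λ_{i+ℓ} > a`) `σ_i = 1 + 2(λ_i−λ_{i+ℓ})/(λ_{i+ℓ}−a)` and
`ε_i = κ_i / T_{M−|Ξ_i|−1}(σ_i)` (`ε_i = 0` for `i > n_ev−ℓ`), there exists a real polynomial
`p` of degree at most `M−1` with `p(λ_i) ≠ 0` such that
`max_{1 ≤ j ≤ n_ev, j ∉ {i,…,i+ℓ−1}} |p(λ_j)|/|p(λ_i)| ≤ ε_i`. -/
theorem exists_poly_ratio_bound (a b : ℝ) (hab : a < b)
    (nev ℓ M : ℕ) (hnev : 1 ≤ nev) (hℓ : 1 ≤ ℓ) (hM : 1 ≤ M)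
    (lam : ℕ → ℝ)
    (hmono : ∀ j k, 1 ≤ j → j ≤ k → k ≤ nev → lam k ≤ lam j)
    (hub : lam 1 ≤ b) (hlb : a ≤ lam nev)
    (hmult : ∀ t : ℝ, ((Finset.Icc 1 nev).filter fun j => lam j = t).card ≤ ℓ)
    (i : ℕ) (hi1 : 1 ≤ i) (hi2 : i ≤ nev)
    (Xi : Finset ℝ) (hXi : Xi = (Finset.Icc 1 (i - 1)).image lam)
    (hsep : 1 < i → lam (i - 1) ≠ lam i)
    (hcard : Xi.card ≤ M - 1)
    (hgap : i ≤ nev - ℓ → a < lam (i + ℓ))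
    (mi : Polynomial ℝ) (hmi : mi = ∏ μ ∈ Xi, (X - C μ))
    (κ : ℝ) (hκ : κ = supAbs (fun t => mi.eval t) a b / |mi.eval (lam i)|)
    (ε : ℝ)
    (hε : ε = if i ≤ nev - ℓ then
        κ / (Polynomial.Chebyshev.T ℝ ((M - Xi.card - 1 : ℕ) : ℤ)).eval
          (1 + 2 * (lam i - lam (i + ℓ)) / (lam (i + ℓ) - a))
      else 0) :
    ∃ p : Polynomial ℝ, p.natDegree ≤ M - 1 ∧ p.eval (lam i) ≠ 0 ∧
      ∀ j, 1 ≤ j → j ≤ nev → (j < i ∨ i + ℓ ≤ j) →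
        |p.eval (lam j)| / |p.eval (lam i)| ≤ ε := by
  -- basic facts about mi
  have hXmem : ∀ μ ∈ Xi, lam i < μ := by
    intro μ hμ
    rw [hXi, Finset.mem_image] at hμ
    obtain ⟨j, hj, rfl⟩ := hμ
    rw [Finset.mem_Icc] at hj
    have hij : 1 < i := by omega
    have h1 : lam (i - 1) ≤ lam j := hmono j (i - 1) hj.1 hj.2 (by omega)
    have h2 : lam i ≤ lam (i - 1) := hmono (i - 1) i (by omega) (by omega) hi2
    have h3 : lam i < lam (i - 1) := lt_of_le_of_ne h2 (Ne.symm (hsep hij))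
    linarith
  have hmieval : ∀ x : ℝ, mi.eval x = ∏ μ ∈ Xi, (x - μ) := by
    intro x; rw [hmi, Polynomial.eval_prod]; simp
  have hmi_ne : mi.eval (lam i) ≠ 0 := by
    rw [hmieval]
    exact Finset.prod_ne_zero_iff.mpr fun μ hμ => sub_ne_zero.mpr (ne_of_lt (hXmem μ hμ))
  have hmi_pos : 0 < |mi.eval (lam i)| := abs_pos.mpr hmi_ne
  have hzero : ∀ j, 1 ≤ j → j < i → mi.eval (lam j) = 0 := by
    intro j hj1 hj2
    rw [hmieval]
    refine Finset.prod_eq_zero (i := lam j) ?_ (by ring)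
    rw [hXi, Finset.mem_image]
    exact ⟨j, Finset.mem_Icc.mpr ⟨hj1, by omega⟩, rfl⟩
  have hdegmi : mi.natDegree ≤ Xi.card := by
    rw [hmi]
    refine le_trans (Polynomial.natDegree_prod_le _ _) ?_
    simp [Polynomial.natDegree_X_sub_C]
  have hmem : ∀ j, 1 ≤ j → j ≤ nev → lam j ∈ Set.Icc a b := by
    intro j hj1 hj2
    exact ⟨le_trans hlb (hmono j nev hj1 hj2 le_rfl),
      le_trans (hmono 1 j le_rfl hj1 hj2) hub⟩
  have hcont : Continuous fun t => mi.eval t := mi.continuous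
  have hS : ∀ t ∈ Set.Icc a b, |mi.eval t| ≤ supAbs (fun t => mi.eval t) a b :=
    supAbs_bound hcont hab
  have hSnn : 0 ≤ supAbs (fun t => mi.eval t) a b :=
    le_trans (abs_nonneg _) (hS (lam i) (hmem i hi1 hi2))
  have hκnn : 0 ≤ κ := by rw [hκ]; exact div_nonneg hSnn (abs_nonneg _)
  by_cases hcase : i ≤ nev - ℓ
  · -- Chebyshev case
    have hilnev : i + ℓ ≤ nev := by omega
    have hd : 0 < lam (i + ℓ) - a := sub_pos.mpr (hgap hcase)
    set n := M - Xi.card - 1 with hn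
    set q := (Polynomial.Chebyshev.T ℝ (n : ℤ)).comp
      (C 1 + C (2 / (lam (i + ℓ) - a)) * (X - C (lam (i + ℓ)))) with hq
    have hqeval : ∀ t : ℝ, q.eval t =
        (Polynomial.Chebyshev.T ℝ (n : ℤ)).eval
          (1 + 2 * (t - lam (i + ℓ)) / (lam (i + ℓ) - a)) := by
      intro t
      rw [hq, Polynomial.eval_comp]
      congr 1
      simp only [Polynomial.eval_add, Polynomial.eval_mul, Polynomial.eval_sub,
        Polynomial.eval_one, Polynomial.eval_C, Polynomial.eval_X]
      ring
    have hσ1 : (1:ℝ) ≤ 1 + 2 * (lam i - lam (i + ℓ)) / (lam (i + ℓ) - a) := by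
      have hmono' : lam (i + ℓ) ≤ lam i := hmono i (i + ℓ) hi1 (by omega) hilnev
      have : 0 ≤ 2 * (lam i - lam (i + ℓ)) / (lam (i + ℓ) - a) :=
        div_nonneg (by linarith) hd.le
      linarith
    have hT : (1:ℝ) ≤ (Polynomial.Chebyshev.T ℝ (n : ℤ)).eval
        (1 + 2 * (lam i - lam (i + ℓ)) / (lam (i + ℓ) - a)) := (cheb_pair hσ1 n).1
    have hqi : q.eval (lam i) = (Polynomial.Chebyshev.T ℝ (n : ℤ)).eval
        (1 + 2 * (lam i - lam (i + ℓ)) / (lam (i + ℓ) - a)) := hqeval _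
    refine ⟨mi * q, ?_, ?_, ?_⟩
    · refine le_trans (Polynomial.natDegree_mul_le) ?_
      have haff : (C (1:ℝ) + C (2 / (lam (i + ℓ) - a)) * (X - C (lam (i + ℓ)))).natDegree ≤ 1 := by
        refine le_trans (Polynomial.natDegree_add_le _ _) ?_
        simp only [Polynomial.natDegree_C, max_le_iff]
        refine ⟨by omega, le_trans (Polynomial.natDegree_mul_le) ?_⟩
        simp [Polynomial.natDegree_X_sub_C]
      have hdq : q.natDegree ≤ n := by
        refine le_trans (Polynomial.natDegree_comp_le) ?_
        calc (Polynomial.Chebyshev.T ℝ (n : ℤ)).natDegree *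
              (C (1:ℝ) + C (2 / (lam (i + ℓ) - a)) * (X - C (lam (i + ℓ)))).natDegree
            ≤ n * 1 := Nat.mul_le_mul (cheb_deg_pair n).1 haff
          _ = n := by omega
      omega
    · rw [Polynomial.eval_mul]
      exact mul_ne_zero hmi_ne (by rw [hqi]; linarith)
    · intro j hj1 hj2 hj3
      rw [hε, if_pos hcase, hκ]
      have hden : |(mi * q).eval (lam i)| = |mi.eval (lam i)| *
          (Polynomial.Chebyshev.T ℝ (n : ℤ)).eval
            (1 + 2 * (lam i - lam (i + ℓ)) / (lam (i + ℓ) - a)) := by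
        have habs : |(Polynomial.Chebyshev.T ℝ (n : ℤ)).eval
            (1 + 2 * (lam i - lam (i + ℓ)) / (lam (i + ℓ) - a))| =
            (Polynomial.Chebyshev.T ℝ (n : ℤ)).eval
            (1 + 2 * (lam i - lam (i + ℓ)) / (lam (i + ℓ) - a)) := abs_of_pos (by linarith)
        rw [Polynomial.eval_mul, abs_mul, hqi, habs]
      have hdenpos : 0 < |mi.eval (lam i)| *
          (Polynomial.Chebyshev.T ℝ (n : ℤ)).eval
            (1 + 2 * (lam i - lam (i + ℓ)) / (lam (i + ℓ) - a)) :=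
        mul_pos hmi_pos (by linarith)
      rcases hj3 with hj3 | hj3
      · rw [Polynomial.eval_mul, hzero j hj1 hj3, zero_mul, abs_zero, zero_div]
        exact div_nonneg (div_nonneg hSnn (abs_nonneg _)) (by linarith)
      · -- j ≥ i + ℓ
        have hja : a ≤ lam j := (hmem j hj1 hj2).1
        have hjle : lam j ≤ lam (i + ℓ) := hmono (i + ℓ) j (by omega) hj3 hj2
        have harg1 : (-1:ℝ) ≤ 1 + 2 * (lam j - lam (i + ℓ)) / (lam (i + ℓ) - a) := by
          have : (-2:ℝ) ≤ 2 * (lam j - lam (i + ℓ)) / (lam (i + ℓ) - a) := by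
            rw [le_div_iff₀ hd]; linarith
          linarith
        have harg2 : 1 + 2 * (lam j - lam (i + ℓ)) / (lam (i + ℓ) - a) ≤ 1 := by
          have : 2 * (lam j - lam (i + ℓ)) / (lam (i + ℓ) - a) ≤ 0 :=
            div_nonpos_of_nonpos_of_nonneg (by linarith) hd.le
          linarith
        have hq1 : |q.eval (lam j)| ≤ 1 := by
          rw [hqeval]; exact cheb_abs_le_one harg1 harg2 n
        have hnum : |(mi * q).eval (lam j)| ≤ supAbs (fun t => mi.eval t) a b := by
          rw [Polynomial.eval_mul, abs_mul]
          calc |mi.eval (lam j)| * |q.eval (lam j)|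
              ≤ supAbs (fun t => mi.eval t) a b * 1 :=
                mul_le_mul (hS _ (hmem j hj1 hj2)) hq1 (abs_nonneg _) hSnn
            _ = supAbs (fun t => mi.eval t) a b := mul_one _
        rw [hden, div_div]
        exact div_le_div_of_nonneg_right hnum hdenpos.le |>.trans_eq rfl
  · -- trivial case
    refine ⟨mi, le_trans hdegmi hcard, hmi_ne, ?_⟩
    intro j hj1 hj2 hj3
    rcases hj3 with hj3 | hj3
    · rw [hzero j hj1 hj3, abs_zero, zero_div, hε, if_neg hcase]
    · omega
end

section
/- For every integer k ≥ 0, (1/(2πi))·∮_{∂Ω} z^k·(zI − A)^{−1} dz = A^k·P, where the integral is taken entrywise over the positively oriented circle ∂Ω. -/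
open Complex

open Metric in
private lemma circleIntegral_finset_sum {ι : Type*} (s : Finset ι) (f : ι → ℂ → ℂ) (c : ℂ)
    (R : ℝ) (h : ∀ i ∈ s, CircleIntegrable (f i) c R) :
    (∮ z in C(c, R), ∑ i ∈ s, f i z) = ∑ i ∈ s, ∮ z in C(c, R), f i z := by
  simp only [circleIntegral, Finset.smul_sum]
  exact intervalIntegral.integral_finset_sum fun i hi => (h i hi).out

/-- let `A` be real symmetric with spectral decomposition
`A = Σ_j λ_j x_j x_jᵀ` (`x_j` orthonormal), no eigenvalue equal to `a` or `b`,
`∂Ω` the positively oriented circle with center `(a+b)/2` and radius `(b−a)/2`, and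
`P = Σ_{λ_j ∈ (a,b)} x_j x_jᵀ` the associated spectral projector. Then for every `k ≥ 0`,
`(1/(2πi))·∮_{∂Ω} z^k (zI − A)^{−1} dz = A^k P`, entrywise. -/
theorem contour_integral_moment (n : ℕ) (A : Matrix (Fin n) (Fin n) ℝ)
    (lam : Fin n → ℝ) (x : Fin n → Fin n → ℝ)
    (hspec : A = ∑ j, lam j • Matrix.vecMulVec (x j) (x j))
    (horth : ∀ j k, dotProduct (x j) (x k) = if j = k then (1 : ℝ) else 0)
    (a b : ℝ) (hab : a < b) (hnoeig : ∀ j, lam j ≠ a ∧ lam j ≠ b) (k : ℕ) :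
    ∀ r c : Fin n,
      (1 / (2 * (Real.pi : ℂ) * Complex.I)) *
          (∮ z in C((((a + b) / 2 : ℝ) : ℂ), (b - a) / 2),
            z ^ k * ((z • (1 : Matrix (Fin n) (Fin n) ℂ) -
              A.map (fun t => (t : ℂ)))⁻¹ r c)) =
        ((A.map (fun t => (t : ℂ))) ^ k *
          ((∑ j ∈ Finset.univ.filter fun j => lam j ∈ Set.Ioo a b,
            Matrix.vecMulVec (x j) (x j)).map (fun t => (t : ℂ)))) r c := by
  classical
  intro r c
  set cen : ℂ := (((a + b) / 2 : ℝ) : ℂ) with hcen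
  set R : ℝ := (b - a) / 2 with hR
  have hRpos : 0 < R := by simp [hR]; linarith
  set Aℂ : Matrix (Fin n) (Fin n) ℂ := A.map (fun t => (t : ℂ)) with hAc
  set E : Fin n → Matrix (Fin n) (Fin n) ℂ :=
    fun j => Matrix.vecMulVec (fun i => (x j i : ℂ)) (fun i => (x j i : ℂ)) with hE
  -- complex orthonormality
  have horthℂ : ∀ j l, (∑ m, (x j m : ℂ) * (x l m : ℂ)) = if j = l then 1 else 0 := by
    intro j l
    have := congrArg (fun t : ℝ => (t : ℂ)) (horth j l)
    simp only [dotProduct] at this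
    push_cast at this
    simpa [apply_ite (fun t : ℝ => (t : ℂ))] using this
  -- E j * E l = δ
  have hEE : ∀ j l, E j * E l = if j = l then E j else 0 := by
    intro j l
    ext i i'
    simp only [hE, Matrix.mul_apply, Matrix.vecMulVec_apply]
    rw [show (∑ m, (x j i : ℂ) * (x j m : ℂ) * ((x l m : ℂ) * (x l i' : ℂ)))
        = ((x j i : ℂ) * (x l i' : ℂ)) * ∑ m, (x j m : ℂ) * (x l m : ℂ) by
      rw [Finset.mul_sum]; congr 1; funext m; ring]
    rw [horthℂ j l]
    by_cases h : j = l <;> simp [h, Matrix.vecMulVec_apply, mul_comm]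
  -- sum of projectors is identity
  have hsumE : (∑ j, E j) = 1 := by
    set X : Matrix (Fin n) (Fin n) ℂ := Matrix.of (fun j i => (x j i : ℂ)) with hX
    have h1 : X * X.transpose = 1 := by
      ext j l
      simp only [hX, Matrix.mul_apply, Matrix.transpose_apply, Matrix.of_apply,
        Matrix.one_apply]
      simpa using horthℂ j l
    have h2 : X.transpose * X = 1 := mul_eq_one_comm.mp h1
    calc (∑ j, E j) = X.transpose * X := by
          ext i i'
          simp [hE, Matrix.sum_apply, Matrix.mul_apply, Matrix.vecMulVec_apply, hX]
      _ = 1 := h2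
  -- spectral decomposition over ℂ
  have hAspec : Aℂ = ∑ j, (lam j : ℂ) • E j := by
    ext i i'
    simp [hAc, hE, hspec, Matrix.sum_apply, Matrix.vecMulVec_apply, Matrix.map_apply]
  -- powers
  have hApow : ∀ m : ℕ, Aℂ ^ m = ∑ j, ((lam j : ℂ)) ^ m • E j := by
    intro m
    induction m with
    | zero => simp [hsumE]
    | succ m ih =>
      rw [pow_succ, ih, hAspec, Finset.sum_mul]
      have step : ∀ j : Fin n, (((lam j : ℂ)) ^ m • E j) * (∑ l, (lam l : ℂ) • E l)
          = ((lam j : ℂ)) ^ (m + 1) • E j := by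
        intro j
        rw [Matrix.smul_mul, Finset.mul_sum]
        simp only [Matrix.mul_smul, hEE, smul_ite, smul_zero]
        rw [Finset.sum_ite_eq]
        simp only [Finset.mem_univ, if_true]
        rw [smul_smul, ← pow_succ]
      exact Finset.sum_congr rfl fun j _ => step j
  -- resolvent formula
  have hres : ∀ z : ℂ, (∀ j, z ≠ (lam j : ℂ)) →
      (z • (1 : Matrix (Fin n) (Fin n) ℂ) - Aℂ)⁻¹ = ∑ j, (z - (lam j : ℂ))⁻¹ • E j := by
    intro z hz
    apply Matrix.inv_eq_right_inv
    rw [Matrix.sub_mul, Matrix.smul_mul, Matrix.one_mul, hAspec, Finset.sum_mul]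
    have step : ∀ j : Fin n, (((lam j : ℂ)) • E j) * (∑ l, (z - (lam l : ℂ))⁻¹ • E l)
        = ((lam j : ℂ) * (z - (lam j : ℂ))⁻¹) • E j := by
      intro j
      rw [Matrix.smul_mul, Finset.mul_sum]
      simp only [Matrix.mul_smul, hEE, smul_ite, smul_zero]
      rw [Finset.sum_ite_eq]
      simp [smul_smul]
    rw [Finset.sum_congr rfl fun j _ => step j, Finset.smul_sum, ← Finset.sum_sub_distrib]
    have : ∀ j : Fin n, z • (z - (lam j : ℂ))⁻¹ • E j
        - ((lam j : ℂ) * (z - (lam j : ℂ))⁻¹) • E j = E j := by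
      intro j
      rw [smul_smul, ← sub_smul]
      have hne : z - (lam j : ℂ) ≠ 0 := sub_ne_zero.mpr (hz j)
      rw [show z * (z - (lam j : ℂ))⁻¹ - (lam j : ℂ) * (z - (lam j : ℂ))⁻¹
          = (z - (lam j : ℂ)) * (z - (lam j : ℂ))⁻¹ by ring, mul_inv_cancel₀ hne, one_smul]
    rw [Finset.sum_congr rfl fun j _ => this j, hsumE]
  -- eigenvalues are not on the circle
  have hsph : ∀ j, ((lam j : ℂ)) ∉ Metric.sphere cen R := by
    intro j hj
    rw [Metric.mem_sphere, Complex.dist_eq] at hj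
    have : ((lam j : ℂ)) - cen = ((lam j - (a + b) / 2 : ℝ) : ℂ) := by
      simp [hcen]
    rw [this, Complex.norm_real, Real.norm_eq_abs] at hj
    rcases abs_eq hRpos.le |>.mp hj with h | h
    · exact (hnoeig j).2 (by simp [hR] at h; linarith)
    · exact (hnoeig j).1 (by simp [hR] at h; linarith)
  -- key per-eigenvalue integrals
  have hint : ∀ j : Fin n,
      (∮ z in C(cen, R), z ^ k * (z - (lam j : ℂ))⁻¹) =
        if lam j ∈ Set.Ioo a b then (2 * (Real.pi : ℂ) * Complex.I) * (lam j : ℂ) ^ k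
        else 0 := by
    intro j
    have hdist : ‖(lam j : ℂ) - cen‖ = |lam j - (a + b) / 2| := by
      have : ((lam j : ℂ)) - cen = ((lam j - (a + b) / 2 : ℝ) : ℂ) := by simp [hcen]
      rw [this, Complex.norm_real, Real.norm_eq_abs]
    by_cases hmem : lam j ∈ Set.Ioo a b
    · rw [if_pos hmem]
      have hball : ((lam j : ℂ)) ∈ Metric.ball cen R := by
        rw [Metric.mem_ball, Complex.dist_eq, hdist, abs_lt]
        obtain ⟨h1, h2⟩ := hmem
        constructor <;> [skip; skip] <;> simp [hR] <;> linarith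
      have hdc : DiffContOnCl ℂ (fun z : ℂ => z ^ k) (Metric.ball cen R) :=
        (differentiable_pow k).diffContOnCl
      have := hdc.circleIntegral_sub_inv_smul hball
      rw [show (fun z : ℂ => z ^ k * (z - (lam j : ℂ))⁻¹)
          = fun z : ℂ => (z - (lam j : ℂ))⁻¹ • z ^ k by funext z; simp [mul_comm]]
      simpa [smul_eq_mul] using this
    · rw [if_neg hmem]
      have houts : ((lam j : ℂ)) ∉ Metric.closedBall cen R := by
        rw [Metric.mem_closedBall, Complex.dist_eq, hdist]
        intro hle
        rw [abs_le] at hle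
        obtain ⟨h1, h2⟩ := hle
        have ha' : a ≤ lam j := by simp [hR] at h1; linarith
        have hb' : lam j ≤ b := by simp [hR] at h2; linarith
        have ha : a < lam j := lt_of_le_of_ne ha' (Ne.symm (hnoeig j).1)
        have hb : lam j < b := lt_of_le_of_ne hb' (hnoeig j).2
        exact hmem ⟨ha, hb⟩
      apply Complex.circleIntegral_eq_zero_of_differentiable_on_off_countable hRpos.le
        Set.countable_empty
      · apply ContinuousOn.mul ((continuous_pow k).continuousOn)
        apply ContinuousOn.inv₀ ((continuous_id.sub continuous_const).continuousOn)
        intro w hw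
        refine sub_ne_zero.mpr fun h : w = (lam j : ℂ) => houts ?_
        rw [← h]; exact hw
      · intro z hz
        have hzne : z - (lam j : ℂ) ≠ 0 := by
          refine sub_ne_zero.mpr fun h : z = (lam j : ℂ) => houts ?_
          rw [← h]; exact Metric.ball_subset_closedBall hz.1
        exact (differentiableAt_pow k).mul ((differentiableAt_id.sub
          (differentiableAt_const _)).inv hzne)
  -- integrands are circle integrable
  have hinteg : ∀ j : Fin n,
      CircleIntegrable (fun z : ℂ => (x j r : ℂ) * (x j c : ℂ)
        * (z ^ k * (z - (lam j : ℂ))⁻¹)) cen R := by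
    intro j
    apply ContinuousOn.circleIntegrable hRpos.le
    apply ContinuousOn.mul continuousOn_const
    apply ContinuousOn.mul ((continuous_pow k).continuousOn)
    apply ContinuousOn.inv₀ ((continuous_id.sub continuous_const).continuousOn)
    intro z hz
    refine sub_ne_zero.mpr fun h : z = (lam j : ℂ) => hsph j ?_
    rw [← h]; exact hz
  -- rewrite the integrand on the sphere
  have hcongr : (∮ z in C(cen, R),
        z ^ k * ((z • (1 : Matrix (Fin n) (Fin n) ℂ) - Aℂ)⁻¹ r c)) =
      ∮ z in C(cen, R), ∑ j, (x j r : ℂ) * (x j c : ℂ) * (z ^ k * (z - (lam j : ℂ))⁻¹) := by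
    apply circleIntegral.integral_congr hRpos.le
    intro z hz
    have hzne : ∀ j, z ≠ (lam j : ℂ) := by
      intro j h
      exact hsph j (by rw [← h]; exact hz)
    simp only [hres z hzne, Matrix.sum_apply, Matrix.smul_apply, hE, Matrix.vecMulVec_apply,
      smul_eq_mul, Finset.mul_sum]
    exact Finset.sum_congr rfl fun j _ => by ring
  rw [hcongr, circleIntegral_finset_sum _ _ _ _ (fun j _ => hinteg j)]
  rw [Finset.sum_congr rfl (fun j _ => circleIntegral.integral_const_mul _ _ _ _)]
  rw [Finset.sum_congr rfl (fun j _ => by rw [hint j])]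
  -- compute the right-hand side
  set filt := Finset.univ.filter fun j : Fin n => lam j ∈ Set.Ioo a b with hfilt
  have hPmap : ((∑ j ∈ filt,
      Matrix.vecMulVec (x j) (x j)).map (fun t => (t : ℂ))) = ∑ j ∈ filt, E j := by
    ext i i'
    simp [Matrix.map_apply, Matrix.sum_apply, Matrix.vecMulVec_apply, hE]
  rw [hPmap, hApow k]
  have hprod : ∀ j : Fin n, ((lam j : ℂ) ^ k • E j) * (∑ l ∈ filt, E l)
      = if j ∈ filt then (lam j : ℂ) ^ k • E j else 0 := by
    intro j
    rw [Matrix.smul_mul, Finset.mul_sum]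
    rw [Finset.sum_congr rfl fun l _ => by rw [hEE]]
    rw [Finset.sum_ite_eq]
    by_cases h : j ∈ filt <;> simp [h]
  have hRHS : ((∑ j, (lam j : ℂ) ^ k • E j) * (∑ l ∈ filt, E l)) r c
      = ∑ j ∈ filt, (lam j : ℂ) ^ k * ((x j r : ℂ) * (x j c : ℂ)) := by
    rw [Finset.sum_mul, Finset.sum_congr rfl fun j _ => hprod j]
    rw [Finset.sum_ite_mem, Finset.univ_inter]
    simp [Matrix.sum_apply, Matrix.smul_apply, hE, Matrix.vecMulVec_apply]
  rw [hRHS]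
  have h2pi : (2 * (Real.pi : ℂ) * Complex.I) ≠ 0 := by
    simp [Real.pi_ne_zero, Complex.I_ne_zero]
  have hterm : ∀ j : Fin n,
      (1 / (2 * (Real.pi : ℂ) * Complex.I)) * ((x j r : ℂ) * (x j c : ℂ) *
        (if lam j ∈ Set.Ioo a b then (2 * (Real.pi : ℂ) * Complex.I) * (lam j : ℂ) ^ k else 0))
      = if lam j ∈ Set.Ioo a b
          then (lam j : ℂ) ^ k * ((x j r : ℂ) * (x j c : ℂ)) else 0 := by
    intro j
    by_cases h : lam j ∈ Set.Ioo a b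
    · rw [if_pos h, if_pos h]
      have h2pi : (2 * (Real.pi : ℂ) * Complex.I) ≠ 0 := by
        simp [Real.pi_ne_zero, Complex.I_ne_zero]
      field_simp
    · simp [h]
  rw [Finset.mul_sum, Finset.sum_congr rfl fun j _ => hterm j, hfilt, Finset.sum_filter]
end

section
/- For every integer M ≥ 2, the degree-(M−1) Chebyshev polynomial of the first kind satisfies T_{M−1}((M+1)/(M−1)) ≥ 3; equivalently, 1/T_{M−1}((M+1)/(M−1)) ≤ 1/3. -/
open Polynomial Polynomial.Chebyshev

lemma cheb_pow_le (x : ℝ) (hx : 1 ≤ x) (n : ℕ) :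
    x ^ n ≤ (T ℝ n).eval x ∧
    (T ℝ n).eval x * x ≤ (T ℝ (n + 1)).eval x := by
  induction n with
  | zero => simp
  | succ n ih =>
    obtain ⟨h1, h2⟩ := ih
    have hx0 : (0:ℝ) < x := lt_of_lt_of_le one_pos hx
    have hTn : 0 < (T ℝ n).eval x := lt_of_lt_of_le (pow_pos hx0 n) h1
    have hpow : x ^ (n + 1) ≤ (T ℝ (n + 1)).eval x := by
      calc x ^ (n + 1) = x ^ n * x := pow_succ x n
        _ ≤ (T ℝ n).eval x * x := by nlinarith
        _ ≤ _ := h2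
    refine ⟨by push_cast; exact hpow, ?_⟩
    have hrec := T_add_two ℝ n
    have heval : (T ℝ ((n:ℤ) + 2)).eval x
        = 2 * x * (T ℝ (n + 1)).eval x - (T ℝ n).eval x := by
      rw [hrec]; simp [mul_assoc]
    have hTn1 : (T ℝ n).eval x ≤ (T ℝ (n+1)).eval x := by nlinarith
    have : ((n:ℤ) + 1 + 1) = (n:ℤ) + 2 := by ring
    push_cast
    rw [this, heval]
    nlinarith [lt_of_lt_of_le hTn hTn1]

/-- for every integer `M ≥ 2`, the degree-`(M−1)` Chebyshev polynomial of the
first kind satisfies `T_{M−1}((M+1)/(M−1)) ≥ 3`; equivalently,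
`1/T_{M−1}((M+1)/(M−1)) ≤ 1/3`. -/
theorem chebyshev_eval_ratio_ge_three (M : ℕ) (hM : 2 ≤ M) :
    3 ≤ (Polynomial.Chebyshev.T ℝ (M - 1 : ℕ)).eval (((M : ℝ) + 1) / ((M : ℝ) - 1)) ∧
    1 / (Polynomial.Chebyshev.T ℝ (M - 1 : ℕ)).eval (((M : ℝ) + 1) / ((M : ℝ) - 1)) ≤ 1 / 3 := by
  set n : ℕ := M - 1 with hn
  have hMr : (2:ℝ) ≤ (M:ℝ) := by exact_mod_cast hM
  have hd : (0:ℝ) < (M:ℝ) - 1 := by linarith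
  set x : ℝ := ((M:ℝ) + 1) / ((M:ℝ) - 1) with hxdef
  have hnr : ((n:ℝ)) = (M:ℝ) - 1 := by
    have : (1:ℕ) ≤ M := by omega
    push_cast [hn, this]; ring
  have hx : x = 1 + 2 / (M - 1 : ℝ) := by rw [hxdef, one_add_div hd.ne']; congr 1; ring
  have hx1 : 1 ≤ x := by
    rw [hx]; have : 0 < 2 / ((M:ℝ) - 1) := by positivity
    linarith
  have hb : (3:ℝ) ≤ x ^ n := by
    have hge : (-2:ℝ) ≤ 2 / ((M:ℝ) - 1) := by
      have h0 : (0:ℝ) ≤ 2 / ((M:ℝ)-1) := by positivity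
      linarith
    have := one_add_mul_le_pow hge n
    rw [hnr] at this
    have h2 : ((M:ℝ) - 1) * (2 / ((M:ℝ) - 1)) = 2 := by field_simp
    calc (3:ℝ) = 1 + ((M:ℝ)-1) * (2 / ((M:ℝ)-1)) := by rw [h2]; norm_num
      _ ≤ (1 + 2 / ((M:ℝ)-1)) ^ n := this
      _ = x ^ n := by rw [hx]
  have hT : 3 ≤ (T ℝ n).eval x := le_trans hb (cheb_pow_le x hx1 n).1
  exact ⟨hT, one_div_le_one_div_of_le (by norm_num) hT⟩
end
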